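/- arXiv:0807.1949 — 6 statements merged into one kernel-verified Lean document; each statement's English description precedes it below -/
import Mathlib

section
/- Let n1, n2, m be natural numbers and let A be the real symmetric (n1+n2+m)×(n1+n2+m) matrix given in block form by A = [[A1, 0, B1], [0, A2, B2], [B1ᵀ, B2ᵀ, C]], where A1 is n1×n1, A2 is n2×n2, B1 is n1×m, B2 is n2×m and C is m×m. If A is symmetric positive definite, then there exist real symmetric m×m matrices C1 and C2 with C1 + C2 = C such that both block matrices [[A1, B1], [B1ᵀ, C1]] and [[A2, B2], [B2ᵀ, C2]] are symmetric positive definite. -/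
open Matrix

section Aux

variable {k l : Type*} [Fintype k] [Fintype l] [DecidableEq k]

/-- The key quadratic-form identity for the Schur complement. -/
lemma quad_identity {A : Matrix k k ℝ} (hA : A.PosDef)
    (B : Matrix k l ℝ) (D : Matrix l l ℝ) (x : k → ℝ) (y : l → ℝ) :
    Sum.elim x y ⬝ᵥ (fromBlocks A B Bᵀ D *ᵥ Sum.elim x y)
      = (x + A⁻¹ *ᵥ (B *ᵥ y)) ⬝ᵥ (A *ᵥ (x + A⁻¹ *ᵥ (B *ᵥ y)))
        + y ⬝ᵥ ((D - Bᵀ * A⁻¹ * B) *ᵥ y) := by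
  have hdet : IsUnit A.det := hA.isUnit.map detMonoidHom
  have hAA : A * A⁻¹ = 1 := mul_nonsing_inv A hdet
  have hAsymm : Aᵀ = A := by
    have := hA.isHermitian
    rwa [IsHermitian, conjTranspose_eq_transpose_of_trivial] at this
  have hAinvsymm : (A⁻¹)ᵀ = A⁻¹ := by rw [transpose_nonsing_inv, hAsymm]
  set w : k → ℝ := A⁻¹ *ᵥ (B *ᵥ y) with hw
  have hAw : A *ᵥ w = B *ᵥ y := by
    rw [hw, mulVec_mulVec, hAA, one_mulVec]
  rw [fromBlocks_mulVec, sumElim_dotProduct_sumElim]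
  have h1 : w ⬝ᵥ (A *ᵥ x) = y ⬝ᵥ (Bᵀ *ᵥ x) := by
    rw [dotProduct_mulVec w A x, ← mulVec_transpose, hAsymm, hAw,
      dotProduct_mulVec y Bᵀ x, ← mulVec_transpose, transpose_transpose]
  have h2 : w ⬝ᵥ (B *ᵥ y) = y ⬝ᵥ ((Bᵀ * A⁻¹ * B) *ᵥ y) := by
    rw [hw, ← mulVec_mulVec, ← mulVec_mulVec, dotProduct_mulVec y Bᵀ _,
      ← mulVec_transpose, dotProduct_comm, dotProduct_mulVec _ A⁻¹ _,
      ← mulVec_transpose, hAinvsymm, transpose_transpose, dotProduct_comm]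
  have h3 : x ⬝ᵥ (A *ᵥ w) = x ⬝ᵥ (B *ᵥ y) := by rw [hAw]
  simp only [mulVec_add, dotProduct_add, add_dotProduct, sub_mulVec, dotProduct_sub,
    Sum.elim_comp_inl, Sum.elim_comp_inr]
  rw [h3, h1, hAw, h2]
  ring

lemma posDef_fromBlocks_of_schur {A : Matrix k k ℝ} (hA : A.PosDef)
    (B : Matrix k l ℝ) {D : Matrix l l ℝ} (hD : Dᵀ = D)
    (hS : (D - Bᵀ * A⁻¹ * B).PosDef) :
    (fromBlocks A B Bᵀ D).PosDef := by
  have hAsymm : Aᵀ = A := by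
    have := hA.isHermitian
    rwa [IsHermitian, conjTranspose_eq_transpose_of_trivial] at this
  rw [posDef_iff_dotProduct_mulVec]
  constructor
  · rw [IsHermitian, conjTranspose_eq_transpose_of_trivial, fromBlocks_transpose,
      hAsymm, hD, transpose_transpose]
  · intro v hv
    have hv' : Sum.elim (v ∘ Sum.inl) (v ∘ Sum.inr) = v := Sum.elim_comp_inl_inr v
    set x := v ∘ Sum.inl
    set y := v ∘ Sum.inr
    have key := quad_identity hA B D x y
    rw [hv'] at key
    rw [star_trivial, key]
    by_cases hy : y = 0
    · have hx : x ≠ 0 := by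
        intro hx
        apply hv
        rw [← hv', hx, hy]
        ext (i | i) <;> simp
      rw [hy]
      simp only [mulVec_zero, dotProduct_zero, add_zero]
      have hxpos := hA.dotProduct_mulVec_pos hx
      rw [star_trivial] at hxpos
      simpa using hxpos
    · have h1 : 0 ≤ (x + A⁻¹ *ᵥ (B *ᵥ y)) ⬝ᵥ (A *ᵥ (x + A⁻¹ *ᵥ (B *ᵥ y))) := by
        have := hA.posSemidef.dotProduct_mulVec_nonneg (x + A⁻¹ *ᵥ (B *ᵥ y))
        rwa [star_trivial] at this
      have h2 : 0 < y ⬝ᵥ ((D - Bᵀ * A⁻¹ * B) *ᵥ y) := by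
        have := hS.dotProduct_mulVec_pos hy
        rwa [star_trivial] at this
      linarith

lemma posDef_toBlocks₁₁ {A : Matrix k k ℝ} {B : Matrix k l ℝ} {C : Matrix l k ℝ}
    {D : Matrix l l ℝ} (h : (fromBlocks A B C D).PosDef) : A.PosDef := by
  rw [posDef_iff_dotProduct_mulVec]
  constructor
  · have := h.isHermitian
    rw [IsHermitian, conjTranspose_eq_transpose_of_trivial, fromBlocks_transpose] at this
    have := congrArg toBlocks₁₁ this
    simpa [toBlocks_fromBlocks₁₁, IsSymm] using this
  · intro x hx
    have hv : (Sum.elim x 0 : k ⊕ l → ℝ) ≠ 0 := by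
      intro hc
      apply hx
      ext i
      exact congrFun hc (Sum.inl i)
    have := h.dotProduct_mulVec_pos hv
    rw [star_trivial, fromBlocks_mulVec, sumElim_dotProduct_sumElim] at this
    simpa using this
  
lemma posDef_toBlocks₂₂ {A : Matrix k k ℝ} {B : Matrix k l ℝ} {C : Matrix l k ℝ}
    {D : Matrix l l ℝ} (h : (fromBlocks A B C D).PosDef) : D.PosDef := by
  rw [posDef_iff_dotProduct_mulVec]
  constructor
  · have := h.isHermitian
    rw [IsHermitian, conjTranspose_eq_transpose_of_trivial, fromBlocks_transpose] at this
    have := congrArg toBlocks₂₂ this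
    simpa [toBlocks_fromBlocks₂₂, IsSymm] using this
  · intro y hy
    have hv : (Sum.elim 0 y : k ⊕ l → ℝ) ≠ 0 := by
      intro hc
      apply hy
      ext i
      exact congrFun hc (Sum.inr i)
    have := h.dotProduct_mulVec_pos hv
    rw [star_trivial, fromBlocks_mulVec, sumElim_dotProduct_sumElim] at this
    simpa using this

lemma schur_posDef_of_fromBlocks {A : Matrix k k ℝ} (B : Matrix k l ℝ)
    {D : Matrix l l ℝ} (h : (fromBlocks A B Bᵀ D).PosDef) :
    (D - Bᵀ * A⁻¹ * B).PosDef := by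
  have hA : A.PosDef := posDef_toBlocks₁₁ h
  have hAsymm : Aᵀ = A := by
    have := hA.isHermitian
    rwa [IsHermitian, conjTranspose_eq_transpose_of_trivial] at this
  have hAinvsymm : (A⁻¹)ᵀ = A⁻¹ := by rw [transpose_nonsing_inv, hAsymm]
  have hDsymm : Dᵀ = D := by
    have := (posDef_toBlocks₂₂ h).isHermitian
    rwa [IsHermitian, conjTranspose_eq_transpose_of_trivial] at this
  rw [posDef_iff_dotProduct_mulVec]
  constructor
  · rw [IsHermitian, conjTranspose_eq_transpose_of_trivial, transpose_sub, hDsymm,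
      transpose_mul, transpose_mul, transpose_transpose, hAinvsymm, Matrix.mul_assoc]
  · intro y hy
    have hv : (Sum.elim (-(A⁻¹ *ᵥ (B *ᵥ y))) y : k ⊕ l → ℝ) ≠ 0 := by
      intro hc
      apply hy
      ext i
      exact congrFun hc (Sum.inr i)
    have := h.dotProduct_mulVec_pos hv
    rw [star_trivial, quad_identity hA B D _ y, neg_add_cancel] at this
    simpa using this

lemma smul_posDef {M : Matrix l l ℝ} (hM : M.PosDef) {c : ℝ} (hc : 0 < c) :
    (c • M).PosDef := by
  rw [posDef_iff_dotProduct_mulVec]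
  constructor
  · have := hM.isHermitian
    rw [IsHermitian, conjTranspose_eq_transpose_of_trivial] at this ⊢
    rw [transpose_smul, this]
  · intro x hx
    have := hM.dotProduct_mulVec_pos hx
    rw [star_trivial] at this ⊢
    rw [smul_mulVec, dotProduct_smul, smul_eq_mul]
    positivity

end Aux

theorem conformal_splitting_two_subgraphs (n1 n2 m : ℕ)
    (A1 : Matrix (Fin n1) (Fin n1) ℝ) (A2 : Matrix (Fin n2) (Fin n2) ℝ)
    (B1 : Matrix (Fin n1) (Fin m) ℝ) (B2 : Matrix (Fin n2) (Fin m) ℝ)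
    (C : Matrix (Fin m) (Fin m) ℝ)
    (hA : (fromBlocks (fromBlocks A1 0 0 A2) (fromRows B1 B2)
        (fromCols B1ᵀ B2ᵀ) C).PosDef) :
    ∃ C1 C2 : Matrix (Fin m) (Fin m) ℝ,
      C1ᵀ = C1 ∧ C2ᵀ = C2 ∧ C1 + C2 = C ∧
      (fromBlocks A1 B1 B1ᵀ C1).PosDef ∧
      (fromBlocks A2 B2 B2ᵀ C2).PosDef := by
  have hCol : fromCols B1ᵀ B2ᵀ = (fromRows B1 B2)ᵀ := (transpose_fromRows B1 B2).symm
  rw [hCol] at hA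
  have hAblk : (fromBlocks A1 0 0 A2 : Matrix _ _ ℝ).PosDef := posDef_toBlocks₁₁ hA
  have hA1 : A1.PosDef := posDef_toBlocks₁₁ hAblk
  have hA2 : A2.PosDef := posDef_toBlocks₂₂ hAblk
  have hA1symm : A1ᵀ = A1 := by
    have := hA1.isHermitian
    rwa [IsHermitian, conjTranspose_eq_transpose_of_trivial] at this
  have hA2symm : A2ᵀ = A2 := by
    have := hA2.isHermitian
    rwa [IsHermitian, conjTranspose_eq_transpose_of_trivial] at this
  have hA1inv : (A1⁻¹)ᵀ = A1⁻¹ := by rw [transpose_nonsing_inv, hA1symm]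
  have hA2inv : (A2⁻¹)ᵀ = A2⁻¹ := by rw [transpose_nonsing_inv, hA2symm]
  -- the inverse of the block diagonal
  have hinv : (fromBlocks A1 0 0 A2 : Matrix _ _ ℝ)⁻¹ = fromBlocks A1⁻¹ 0 0 A2⁻¹ := by
    apply inv_eq_right_inv
    rw [fromBlocks_multiply]
    simp [mul_nonsing_inv A1 (hA1.isUnit.map detMonoidHom),
      mul_nonsing_inv A2 (hA2.isUnit.map detMonoidHom), ← fromBlocks_one]
  have hSpos : (C - (fromRows B1 B2)ᵀ * (fromBlocks A1 0 0 A2)⁻¹ * fromRows B1 B2).PosDef :=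
    schur_posDef_of_fromBlocks _ hA
  have hprod : (fromRows B1 B2)ᵀ * (fromBlocks A1 0 0 A2)⁻¹ * fromRows B1 B2
      = B1ᵀ * A1⁻¹ * B1 + B2ᵀ * A2⁻¹ * B2 := by
    rw [hinv, transpose_fromRows, fromCols_mul_fromBlocks, fromCols_mul_fromRows]
    simp [Matrix.mul_assoc]
  rw [hprod] at hSpos
  set S : Matrix (Fin m) (Fin m) ℝ := C - (B1ᵀ * A1⁻¹ * B1 + B2ᵀ * A2⁻¹ * B2) with hS
  have hSsymm : Sᵀ = S := by
    have := hSpos.isHermitian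
    rwa [IsHermitian, conjTranspose_eq_transpose_of_trivial] at this
  refine ⟨B1ᵀ * A1⁻¹ * B1 + (1/2 : ℝ) • S, B2ᵀ * A2⁻¹ * B2 + (1/2 : ℝ) • S, ?_, ?_, ?_, ?_, ?_⟩
  · rw [transpose_add, transpose_smul, hSsymm, transpose_mul, transpose_mul,
      transpose_transpose, hA1inv, Matrix.mul_assoc]
  · rw [transpose_add, transpose_smul, hSsymm, transpose_mul, transpose_mul,
      transpose_transpose, hA2inv, Matrix.mul_assoc]
  · have : (1/2 : ℝ) • S + (1/2 : ℝ) • S = S := by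
      rw [← add_smul]; norm_num
    rw [add_add_add_comm, this, hS]
    abel
  · apply posDef_fromBlocks_of_schur hA1 B1
    · rw [transpose_add, transpose_smul, hSsymm, transpose_mul, transpose_mul,
        transpose_transpose, hA1inv, Matrix.mul_assoc]
    · rw [add_sub_cancel_left]
      exact smul_posDef hSpos (by norm_num)
  · apply posDef_fromBlocks_of_schur hA2 B2
    · rw [transpose_add, transpose_smul, hSsymm, transpose_mul, transpose_mul,
        transpose_transpose, hA2inv, Matrix.mul_assoc]
    · rw [add_sub_cancel_left]
      exact smul_posDef hSpos (by norm_num)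
end

section
/- Let n1, n2, m be natural numbers and let A be the real symmetric (n1+n2+m)×(n1+n2+m) matrix given in block form by A = [[A1, 0, B1], [0, A2, B2], [B1ᵀ, B2ᵀ, C]], where A1 is n1×n1, A2 is n2×n2, B1 is n1×m, B2 is n2×m and C is m×m. If A is symmetric positive definite, then there exist real symmetric m×m matrices C1 and C2 with C1 + C2 = C such that both block matrices [[A1, B1], [B1ᵀ, C1]] and [[A2, B2], [B2ᵀ, C2]] are symmetric positive semidefinite. -/
open Matrix

lemma posDef_of_fromBlocks₁₁' {p q : Type*} [Fintype p] [Fintype q] [DecidableEq p] [DecidableEq q]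
    {A : Matrix p p ℝ} {B : Matrix p q ℝ} {Cm : Matrix q p ℝ} {D : Matrix q q ℝ}
    (h : (fromBlocks A B Cm D).PosDef) : A.PosDef := by
  rw [posDef_iff_dotProduct_mulVec]
  constructor
  · have h1 := h.1
    unfold Matrix.IsHermitian at h1
    rw [fromBlocks_conjTranspose] at h1
    have := congrArg Matrix.toBlocks₁₁ h1
    simpa [toBlocks_fromBlocks₁₁, Matrix.IsSymm] using this
  · intro x hx
    have hy : (Sum.elim x 0 : p ⊕ q → ℝ) ≠ 0 := by
      intro h0
      apply hx
      ext i
      have := congrFun h0 (Sum.inl i)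
      simpa using this
    have := h.dotProduct_mulVec_pos hy
    simpa [fromBlocks_mulVec, sumElim_dotProduct_sumElim, Function.star_sumElim] using this

lemma posDef_of_fromBlocks₂₂' {p q : Type*} [Fintype p] [Fintype q] [DecidableEq p] [DecidableEq q]
    {A : Matrix p p ℝ} {B : Matrix p q ℝ} {Cm : Matrix q p ℝ} {D : Matrix q q ℝ}
    (h : (fromBlocks A B Cm D).PosDef) : D.PosDef := by
  rw [posDef_iff_dotProduct_mulVec]
  constructor
  · have h1 := h.1
    unfold Matrix.IsHermitian at h1
    rw [fromBlocks_conjTranspose] at h1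
    have := congrArg Matrix.toBlocks₂₂ h1
    simpa [toBlocks_fromBlocks₂₂, Matrix.IsSymm] using this
  · intro x hx
    have hy : (Sum.elim 0 x : p ⊕ q → ℝ) ≠ 0 := by
      intro h0
      apply hx
      ext i
      have := congrFun h0 (Sum.inr i)
      simpa using this
    have := h.dotProduct_mulVec_pos hy
    simpa [fromBlocks_mulVec, sumElim_dotProduct_sumElim, Function.star_sumElim] using this

theorem conformal_splitting_two_subgraphs_semidef (n1 n2 m : ℕ)
    (A1 : Matrix (Fin n1) (Fin n1) ℝ) (A2 : Matrix (Fin n2) (Fin n2) ℝ)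
    (B1 : Matrix (Fin n1) (Fin m) ℝ) (B2 : Matrix (Fin n2) (Fin m) ℝ)
    (C : Matrix (Fin m) (Fin m) ℝ)
    (hA : (fromBlocks (fromBlocks A1 0 0 A2) (fromRows B1 B2)
        (fromCols B1ᵀ B2ᵀ) C).PosDef) :
    ∃ C1 C2 : Matrix (Fin m) (Fin m) ℝ,
      C1ᵀ = C1 ∧ C2ᵀ = C2 ∧ C1 + C2 = C ∧
      (fromBlocks A1 B1 B1ᵀ C1).PosSemidef ∧
      (fromBlocks A2 B2 B2ᵀ C2).PosSemidef := by
  -- the top-left block-diagonal is positive definite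
  have hD : (fromBlocks A1 0 0 A2).PosDef := posDef_of_fromBlocks₁₁' hA
  have hA1 : A1.PosDef := posDef_of_fromBlocks₁₁' hD
  have hA2 : A2.PosDef := posDef_of_fromBlocks₂₂' hD
  haveI : Invertible A1 := hA1.isUnit.invertible
  haveI : Invertible A2 := hA2.isUnit.invertible
  haveI : Invertible (fromBlocks A1 0 (0 : Matrix (Fin n2) (Fin n1) ℝ) A2) :=
    hD.isUnit.invertible
  have hct1 : B1ᴴ = B1ᵀ := rfl
  have hct2 : B2ᴴ = B2ᵀ := rfl
  -- inverse of the block diagonal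
  have hinv : (fromBlocks A1 0 (0 : Matrix (Fin n2) (Fin n1) ℝ) A2)⁻¹ =
      fromBlocks A1⁻¹ 0 0 A2⁻¹ := by
    rw [inv_fromBlocks_zero₂₁_of_isUnit_iff _ _ _ (by simp [hA1.isUnit, hA2.isUnit])]
    simp
  -- the Schur complement of the whole matrix is positive semidefinite
  set S : Matrix (Fin m) (Fin m) ℝ := C - B1ᵀ * A1⁻¹ * B1 - B2ᵀ * A2⁻¹ * B2 with hSdef
  have hS : S.PosSemidef := by
    have hiff := PosDef.fromBlocks₁₁ (R' := ℝ) (fromRows B1 B2) C hD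
    have hherm : (fromRows B1 B2)ᴴ = fromCols B1ᵀ B2ᵀ := by
      rw [conjTranspose_fromRows_eq_fromCols_conjTranspose]; rfl
    rw [hherm] at hiff
    have h2 := hiff.mp hA.posSemidef
    rw [hinv] at h2
    have hcalc : fromCols B1ᵀ B2ᵀ * fromBlocks A1⁻¹ 0 0 A2⁻¹ * fromRows B1 B2 =
        B1ᵀ * A1⁻¹ * B1 + B2ᵀ * A2⁻¹ * B2 := by
      rw [fromCols_mul_fromBlocks, fromCols_mul_fromRows]
      simp [Matrix.mul_assoc]
    rw [hcalc] at h2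
    simpa [hSdef, sub_sub] using h2
  -- symmetry facts
  have hSsym : Sᵀ = S := hS.1
  have h1sym : (B1ᵀ * A1⁻¹ * B1)ᵀ = B1ᵀ * A1⁻¹ * B1 := by
    have h : (A1⁻¹)ᵀ = A1⁻¹ := (hA1.1.inv : (A1⁻¹)ᴴ = A1⁻¹)
    simp [Matrix.transpose_mul, Matrix.mul_assoc, h]
  have h2sym : (B2ᵀ * A2⁻¹ * B2)ᵀ = B2ᵀ * A2⁻¹ * B2 := by
    have h : (A2⁻¹)ᵀ = A2⁻¹ := (hA2.1.inv : (A2⁻¹)ᴴ = A2⁻¹)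
    simp [Matrix.transpose_mul, Matrix.mul_assoc, h]
  refine ⟨B1ᵀ * A1⁻¹ * B1 + S, B2ᵀ * A2⁻¹ * B2, ?_, ?_, ?_, ?_, ?_⟩
  · rw [Matrix.transpose_add, h1sym, hSsym]
  · exact h2sym
  · rw [hSdef]; abel
  · rw [← hct1, PosDef.fromBlocks₁₁ _ _ hA1, hct1]
    simpa using hS
  · rw [← hct2, PosDef.fromBlocks₁₁ _ _ hA2, hct2]
    simpa using (Matrix.PosSemidef.zero : (0 : Matrix (Fin m) (Fin m) ℝ).PosSemidef)
end

section
/- Let N ≥ 1, let n_1, …, n_N and m be natural numbers, and let A be the real symmetric matrix of size (n_1+…+n_N+m) whose block structure is: diagonal blocks D_1, …, D_N (with D_i of size n_i×n_i), zero blocks between distinct inner index blocks i ≠ j, coupling blocks B_i (of size n_i×m) between the i-th inner block and the last (boundary) block, and boundary diagonal block C (of size m×m); that is, A = [[D_1, 0, …, 0, B_1], [0, D_2, …, 0, B_2], …, [0, 0, …, D_N, B_N], [B_1ᵀ, B_2ᵀ, …, B_Nᵀ, C]]. If A is symmetric positive definite, then there exist real symmetric m×m matrices C_1, …, C_N with C_1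 + … + C_N = C such that each block matrix [[D_i, B_i], [B_iᵀ, C_i]] is symmetric positive definite. -/
open Matrix

section Aux

variable {p q : Type*} [Fintype p] [Fintype q] [DecidableEq p] [DecidableEq q]

/-- Over ℝ, conjTranspose equals transpose. -/
private lemma real_conjT {r s : Type*} (M : Matrix r s ℝ) : Mᴴ = Mᵀ :=
  conjTranspose_eq_transpose_of_trivial M

/-- the left upper block of a PosDef block matrix is PosDef -/
private lemma posDef_fromBlocks_left {A : Matrix p p ℝ} {B' : Matrix p q ℝ}
    {C' : Matrix q p ℝ} {E : Matrix q q ℝ}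
    (h : (fromBlocks A B' C' E).PosDef) : A.PosDef := by
  obtain ⟨hherm, hpos⟩ := posDef_iff_dotProduct_mulVec.mp h
  rw [isHermitian_fromBlocks_iff] at hherm
  refine posDef_iff_dotProduct_mulVec.mpr ⟨hherm.1, fun x hx => ?_⟩
  have hx' : (Sum.elim x (0 : q → ℝ)) ≠ 0 := by
    intro hc
    apply hx
    ext i
    exact congrFun hc (Sum.inl i)
  have := hpos hx'
  simpa [fromBlocks_mulVec, dotProduct] using this

/-- Schur complement characterization of positive definiteness over ℝ. -/
private lemma posDef_fromBlocks_iff {A : Matrix p p ℝ} (B' : Matrix p q ℝ)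
    (E : Matrix q q ℝ) (hA : A.PosDef) :
    (fromBlocks A B' B'ᵀ E).PosDef ↔ (E - B'ᵀ * A⁻¹ * B').PosDef := by
  haveI : Invertible A := hA.isUnit.invertible
  have hBt : B'ᵀ = B'ᴴ := (real_conjT B').symm
  have schur : ∀ (x : p → ℝ) (y : q → ℝ),
      Sum.elim x y ⬝ᵥ (fromBlocks A B' B'ᵀ E) *ᵥ Sum.elim x y =
        (x + (A⁻¹ * B') *ᵥ y) ⬝ᵥ A *ᵥ (x + (A⁻¹ * B') *ᵥ y) +
          y ⬝ᵥ (E - B'ᵀ * A⁻¹ * B') *ᵥ y := by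
    intro x y
    have := schur_complement_eq₁₁ (A := A) B' E x y hA.1
    simp only [star_trivial, ← hBt] at this
    simpa [dotProduct_mulVec] using this
  constructor
  · intro h
    have hherm : (fromBlocks A B' B'ᴴ E).IsHermitian := by rw [← hBt]; exact h.1
    refine posDef_iff_dotProduct_mulVec.mpr ⟨((IsHermitian.fromBlocks₁₁ B' E hA.1).mp hherm), fun y hy => ?_⟩
    have hz : Sum.elim (-((A⁻¹ * B') *ᵥ y)) y ≠ 0 := by
      intro hc
      apply hy
      ext i
      exact congrFun hc (Sum.inr i)
    have := h.dotProduct_mulVec_pos hz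
    rw [star_trivial, schur] at this
    simpa using this
  · intro h
    have hherm : (fromBlocks A B' B'ᵀ E).IsHermitian := by
      rw [hBt]
      exact (IsHermitian.fromBlocks₁₁ B' E hA.1).mpr h.1
    refine posDef_iff_dotProduct_mulVec.mpr ⟨hherm, fun z hz => ?_⟩
    have hz' : z = Sum.elim (z ∘ Sum.inl) (z ∘ Sum.inr) := by
      ext (i | i) <;> rfl
    rw [star_trivial, hz', schur]
    by_cases hy : (z ∘ Sum.inr) = 0
    · have hx : (z ∘ Sum.inl) ≠ 0 := by
        intro hc
        apply hz
        ext (i | i)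
        · exact congrFun hc i
        · exact congrFun hy i
      have h1 : 0 < (z ∘ Sum.inl + (A⁻¹ * B') *ᵥ (z ∘ Sum.inr)) ⬝ᵥ
          A *ᵥ (z ∘ Sum.inl + (A⁻¹ * B') *ᵥ (z ∘ Sum.inr)) := by
        rw [hy]
        simpa using hA.dotProduct_mulVec_pos hx
      have h2 : 0 ≤ (z ∘ Sum.inr) ⬝ᵥ (E - B'ᵀ * A⁻¹ * B') *ᵥ (z ∘ Sum.inr) := by
        simpa using h.posSemidef.dotProduct_mulVec_nonneg (z ∘ Sum.inr)
      linarith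
    · have h1 : 0 ≤ (z ∘ Sum.inl + (A⁻¹ * B') *ᵥ (z ∘ Sum.inr)) ⬝ᵥ
          A *ᵥ (z ∘ Sum.inl + (A⁻¹ * B') *ᵥ (z ∘ Sum.inr)) := by
        have := hA.posSemidef.dotProduct_mulVec_nonneg (z ∘ Sum.inl + (A⁻¹ * B') *ᵥ (z ∘ Sum.inr))
        rwa [star_trivial] at this
      have h2 : 0 < (z ∘ Sum.inr) ⬝ᵥ (E - B'ᵀ * A⁻¹ * B') *ᵥ (z ∘ Sum.inr) := by
        simpa using h.dotProduct_mulVec_pos hy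
      linarith

/-- Positive definiteness is preserved under principal submatrices via injective maps. -/
private lemma posDef_submatrix {l : Type*} [Fintype l]
    {M : Matrix p p ℝ} (hM : M.PosDef) {f : l → p} (hf : Function.Injective f) :
    (M.submatrix f f).PosDef := by
  have hherm : (M.submatrix f f).IsHermitian := by
    have := hM.1
    unfold IsHermitian at this ⊢
    rw [conjTranspose_submatrix, this]
  refine posDef_iff_dotProduct_mulVec.mpr ⟨hherm, fun x hx => ?_⟩
  classical
  set y : p → ℝ := fun j => ∑ i, if j = f i then x i else 0 with hy
  have hT : ∀ j, (M *ᵥ y) j = ∑ i, M j (f i) * x i := by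
    intro j
    simp only [mulVec, dotProduct, hy, Finset.mul_sum, mul_ite, mul_zero]
    rw [Finset.sum_comm]
    refine Finset.sum_congr rfl fun i _ => ?_
    simp
  have key : x ⬝ᵥ (M.submatrix f f) *ᵥ x = y ⬝ᵥ M *ᵥ y := by
    have hR : y ⬝ᵥ M *ᵥ y = ∑ i', x i' * ∑ i, M (f i') (f i) * x i := by
      simp only [dotProduct, hT, hy, Finset.sum_mul, ite_mul, zero_mul]
      rw [Finset.sum_comm]
      refine Finset.sum_congr rfl fun i _ => ?_
      simp
      exact Or.inl (hT (f i))
    rw [hR]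
    simp [dotProduct, mulVec, submatrix_apply]
  have hyne : y ≠ 0 := by
    obtain ⟨i, hi⟩ := Function.ne_iff.mp hx
    intro hc
    apply hi
    have : y (f i) = x i := by
      simp only [hy]
      rw [Finset.sum_eq_single i]
      · simp
      · intro b _ hb
        exact if_neg fun h => hb (hf h).symm
      · simp
    rw [hc] at this
    simpa using this.symm
  have := hM.dotProduct_mulVec_pos hyne
  rw [star_trivial] at this
  rw [star_trivial, key]
  exact this

private lemma posDef_smul {M : Matrix q q ℝ} (hM : M.PosDef) {c : ℝ} (hc : 0 < c) :
    (c • M).PosDef := by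
  refine posDef_iff_dotProduct_mulVec.mpr ⟨?_, fun x hx => ?_⟩
  · have := hM.1
    unfold IsHermitian at this ⊢
    rw [conjTranspose_smul, this]
    simp
  · rw [smul_mulVec, dotProduct_smul, smul_eq_mul]
    exact mul_pos hc (by simpa using hM.dotProduct_mulVec_pos hx)

end Aux

theorem conformal_splitting_existence (N : ℕ) (hN : 1 ≤ N)
    (n : Fin N → ℕ) (m : ℕ)
    (D : ∀ i : Fin N, Matrix (Fin (n i)) (Fin (n i)) ℝ)
    (B : ∀ i : Fin N, Matrix (Fin (n i)) (Fin m) ℝ)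
    (C : Matrix (Fin m) (Fin m) ℝ)
    (hA : (fromBlocks (blockDiagonal' D)
        (Matrix.of fun (p : Σ i : Fin N, Fin (n i)) (j : Fin m) => B p.1 p.2 j)
        (Matrix.of fun (p : Σ i : Fin N, Fin (n i)) (j : Fin m) => B p.1 p.2 j)ᵀ
        C).PosDef) :
    ∃ Cs : Fin N → Matrix (Fin m) (Fin m) ℝ,
      (∀ i, (Cs i)ᵀ = Cs i) ∧ (∑ i, Cs i) = C ∧
      ∀ i, (fromBlocks (D i) (B i) (B i)ᵀ (Cs i)).PosDef := by
  classical
  set Bbig : Matrix (Σ i : Fin N, Fin (n i)) (Fin m) ℝ :=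
    Matrix.of fun p j => B p.1 p.2 j with hBbig
  -- the big diagonal block is PosDef
  have hDfull : (blockDiagonal' D).PosDef := posDef_fromBlocks_left hA
  -- each D i is PosDef
  have hDi : ∀ i, (D i).PosDef := by
    intro i
    have hinj : Function.Injective (fun a : Fin (n i) => (⟨i, a⟩ : Σ j, Fin (n j))) := by
      intro a b h
      simpa using h
    have := posDef_submatrix hDfull hinj
    have heq : (blockDiagonal' D).submatrix
        (fun a : Fin (n i) => (⟨i, a⟩ : Σ j, Fin (n j)))
        (fun a : Fin (n i) => (⟨i, a⟩ : Σ j, Fin (n j))) = D i := by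
      ext a b
      simp [blockDiagonal'_apply]
    rwa [heq] at this
  have hDiInv : ∀ i, ((D i)⁻¹).PosDef := fun i => (hDi i).inv
  -- inverse of the block diagonal
  have hinv : (blockDiagonal' D)⁻¹ = blockDiagonal' (fun i => (D i)⁻¹) := by
    apply inv_eq_right_inv
    rw [← blockDiagonal'_mul]
    have : (fun i => D i * (D i)⁻¹) = fun _ => 1 := by
      funext i
      exact mul_nonsing_inv _ ((isUnit_iff_isUnit_det _).mp (hDi i).isUnit)
    rw [this]
    exact blockDiagonal'_one
  -- compute the Schur term as a sum
  have hsum : Bbigᵀ * (blockDiagonal' D)⁻¹ * Bbig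
      = ∑ i, (B i)ᵀ * (D i)⁻¹ * B i := by
    rw [hinv]
    ext j k
    rw [Matrix.mul_assoc, mul_apply]
    rw [← Finset.univ_sigma_univ, Finset.sum_sigma]
    rw [Matrix.sum_apply]
    refine Finset.sum_congr rfl fun i _ => ?_
    rw [Matrix.mul_assoc, mul_apply]
    refine Finset.sum_congr rfl fun a _ => ?_
    have h1 : Bbigᵀ j ⟨i, a⟩ = (B i)ᵀ j a := rfl
    rw [h1]
    congr 1
    -- (blockDiagonal' (fun i => (D i)⁻¹) * Bbig) ⟨i,a⟩ k = ((D i)⁻¹ * B i) a k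
    rw [mul_apply, mul_apply]
    rw [← Finset.univ_sigma_univ, Finset.sum_sigma]
    rw [Finset.sum_eq_single i]
    · refine Finset.sum_congr rfl fun b _ => ?_
      rw [blockDiagonal'_apply]
      simp [hBbig]
    · intro i' _ hi'
      apply Finset.sum_eq_zero
      intro b _
      rw [blockDiagonal'_apply]
      simp [Ne.symm hi']
    · simp
  -- the Schur complement of the big matrix
  have hS : (C - ∑ i, (B i)ᵀ * (D i)⁻¹ * B i).PosDef := by
    have := (posDef_fromBlocks_iff Bbig C hDfull).mp hA
    rwa [hsum] at this
  set S : Matrix (Fin m) (Fin m) ℝ := C - ∑ i, (B i)ᵀ * (D i)⁻¹ * B i with hSdef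
  have hNpos : (0 : ℝ) < (N : ℝ) := by exact_mod_cast hN
  -- symmetry facts
  have hsymBDB : ∀ i, ((B i)ᵀ * (D i)⁻¹ * B i)ᵀ = (B i)ᵀ * (D i)⁻¹ * B i := by
    intro i
    have hDsym : ((D i)⁻¹)ᵀ = (D i)⁻¹ := by
      have := (hDiInv i).1
      rw [← real_conjT]
      exact this
    rw [Matrix.transpose_mul, Matrix.transpose_mul, transpose_transpose, hDsym,
      Matrix.mul_assoc]
  have hsymS : Sᵀ = S := by
    have := hS.1
    rw [← real_conjT]
    exact this
  refine ⟨fun i => (B i)ᵀ * (D i)⁻¹ * B i + ((N : ℝ)⁻¹) • S, ?_, ?_, ?_⟩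
  · intro i
    rw [Matrix.transpose_add, hsymBDB, Matrix.transpose_smul, hsymS]
  · rw [Finset.sum_add_distrib, Finset.sum_const, Finset.card_fin, ← Nat.cast_smul_eq_nsmul ℝ,
      smul_smul, mul_inv_cancel₀ hNpos.ne', one_smul, hSdef]
    abel
  · intro i
    rw [posDef_fromBlocks_iff _ _ (hDi i)]
    have : (B i)ᵀ * (D i)⁻¹ * B i + (N : ℝ)⁻¹ • S - (B i)ᵀ * (D i)⁻¹ * B i
        = (N : ℝ)⁻¹ • S := by abel
    rw [this]
    exact posDef_smul hS (by positivity)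
end

section
/- Let Z be a real symmetric positive definite r×r matrix, let M be the 2r×2r block-diagonal matrix M = [[Z, 0], [0, Z]], let S be a real symmetric positive definite 2r×2r matrix, let J be the 2r×2r swap matrix J = [[0, I], [I, 0]], and let P := (I + M·S)⁻¹ · J · (I − M·S) (the matrix I + M·S being invertible). Then there exist a constant c ≥ 0 and a real number ρ with 0 ≤ ρ < 1 such that for every natural number k ≥ 1, the ℓ²-operator norm of P^k satisfies ‖P^k‖₂ ≤ c · ρ^(k−1). -/
open Matrix
open scoped MatrixOrder

set_option maxHeartbeats 4000000

private lemma posDef_conj_aux {n : Type*} [Fintype n] [DecidableEq n]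
    {S W : Matrix n n ℝ} (hS : S.PosDef) (hW : IsUnit W.det) :
    (Wᴴ * S * W).PosDef := by
  exact hS.conjTranspose_mul_mul_same (mulVec_injective_iff_isUnit.2 (by rwa [isUnit_iff_isUnit_det]))

theorem iteration_matrix_power_norm_bound (r : ℕ)
    (Z : Matrix (Fin r) (Fin r) ℝ) (hZ : Z.PosDef)
    (S : Matrix (Fin r ⊕ Fin r) (Fin r ⊕ Fin r) ℝ) (hS : S.PosDef)
    (M J P : Matrix (Fin r ⊕ Fin r) (Fin r ⊕ Fin r) ℝ)
    (hM : M = fromBlocks Z 0 0 Z)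
    (hJ : J = fromBlocks 0 1 1 0)
    (hP : P = (1 + M * S)⁻¹ * J * (1 - M * S)) :
    ∃ c ρ : ℝ, 0 ≤ c ∧ 0 ≤ ρ ∧ ρ < 1 ∧
      ∀ k : ℕ, 1 ≤ k →
        ‖toEuclideanCLM (𝕜 := ℝ) (P ^ k)‖ ≤ c * ρ ^ (k - 1) := by
  by_cases hr : r = 0
  · subst hr
    refine ⟨0, 0, le_refl 0, le_refl 0, one_pos, fun k hk => ?_⟩
    have hsub : ∀ x : EuclideanSpace ℝ (Fin 0 ⊕ Fin 0), x = 0 := fun x =>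
      Subsingleton.elim _ _
    have h0 : toEuclideanCLM (𝕜 := ℝ) (P ^ k) = 0 := ContinuousLinearMap.ext fun x => by
      rw [hsub x, _root_.map_zero, ContinuousLinearMap.zero_apply]
    rw [h0, norm_zero, zero_mul]
  -- main case
  letI : Nonempty (Fin r) := ⟨⟨0, Nat.pos_of_ne_zero hr⟩⟩
  set φ := (toEuclideanCLM (𝕜 := ℝ) (n := Fin r ⊕ Fin r)) with hφ
  -- nontriviality of Euclidean space
  have hx0 : (EuclideanSpace.single (Sum.inl (⟨0, Nat.pos_of_ne_zero hr⟩ : Fin r)) (1:ℝ) : EuclideanSpace ℝ (Fin r ⊕ Fin r)) ≠ 0 := by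
    intro h
    have := congrFun (congrArg (fun v : EuclideanSpace ℝ (Fin r ⊕ Fin r) => (v : (Fin r ⊕ Fin r) → ℝ))
      h) (Sum.inl (⟨0, Nat.pos_of_ne_zero hr⟩ : Fin r))
    simp [EuclideanSpace.single] at this
  haveI : Nontrivial (EuclideanSpace ℝ (Fin r ⊕ Fin r)) := nontrivial_of_ne _ _ hx0
  have hone : ‖(1 : EuclideanSpace ℝ (Fin r ⊕ Fin r) →L[ℝ] EuclideanSpace ℝ (Fin r ⊕ Fin r))‖ = 1 :=
    ContinuousLinearMap.norm_id
  -- square root of Z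
  set R := CFC.sqrt Z with hRdef
  have hRR : R * R = Z := CFC.sqrt_mul_sqrt_self Z hZ.posSemidef.nonneg
  have hRH : Rᴴ = R := (CFC.sqrt_nonneg Z).posSemidef.1
  have hRdet : IsUnit R.det := by
    have h : R.det * R.det = Z.det := by rw [← det_mul, hRR]
    rw [isUnit_iff_ne_zero]
    intro h0
    rw [h0, mul_zero] at h
    exact hZ.det_pos.ne' h.symm
  set W := fromBlocks R 0 0 R with hWdef
  have hRT : Rᵀ = R := by
    have := hRH
    rwa [conjTranspose_eq_transpose_of_trivial] at this
  have hWH : Wᴴ = W := by rw [hWdef, fromBlocks_conjTranspose]; simp [hRH, hRT]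
  have hWW : W * W = M := by rw [hM, hWdef, fromBlocks_multiply]; simp [hRR]
  have hWdet : IsUnit W.det := by
    rw [hWdef, det_fromBlocks_zero₂₁]
    exact hRdet.mul hRdet
  have hWiW : W⁻¹ * W = 1 := nonsing_inv_mul W hWdet
  have hWWi : W * W⁻¹ = 1 := mul_nonsing_inv W hWdet
  have hJJ : J * J = 1 := by rw [hJ, fromBlocks_multiply]; simp [← fromBlocks_one]
  have hJH : Jᴴ = J := by rw [hJ, fromBlocks_conjTranspose]; simp
  have hWJ : W * J = J * W := by
    rw [hJ, hWdef, fromBlocks_multiply, fromBlocks_multiply]; simp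
  have hWiJ : W⁻¹ * J = J * W⁻¹ := by
    have h1 : W⁻¹ * (W * J) * W⁻¹ = W⁻¹ * (J * W) * W⁻¹ := by rw [hWJ]
    rw [← Matrix.mul_assoc W⁻¹ W J, hWiW, Matrix.one_mul] at h1
    rw [Matrix.mul_assoc W⁻¹ (J * W) W⁻¹, Matrix.mul_assoc J W W⁻¹, hWWi, Matrix.mul_one] at h1
    exact h1.symm
  clear_value R W
  -- T
  set T := W * S * W with hTdef
  have hT : T.PosDef := by
    have h := posDef_conj_aux hS hWdet
    rwa [hWH] at h
  have h1T : (1 + T).PosDef := Matrix.PosDef.one.add hT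
  have h1Tdet : IsUnit (1 + T).det := isUnit_iff_ne_zero.2 h1T.det_pos.ne'
  have h1TiT : (1 + T)⁻¹ * (1 + T) = 1 := nonsing_inv_mul _ h1Tdet
  have h1TTi : (1 + T) * (1 + T)⁻¹ = 1 := mul_nonsing_inv _ h1Tdet
  set U := CFC.sqrt T with hUdef
  have hUU : U * U = T := CFC.sqrt_mul_sqrt_self T hT.posSemidef.nonneg
  have hUH : Uᴴ = U := (CFC.sqrt_nonneg T).posSemidef.1
  have hUdet : IsUnit U.det := by
    have h : U.det * U.det = T.det := by rw [← det_mul, hUU]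
    rw [isUnit_iff_ne_zero]
    intro h0
    rw [h0, mul_zero] at h
    exact hT.det_pos.ne' h.symm
  have hUiU : U⁻¹ * U = 1 := nonsing_inv_mul U hUdet
  clear_value T U
  -- similarity
  have hMSp : 1 + M * S = W * (1 + T) * W⁻¹ := by
    have h : W * (1 + T) * W⁻¹ = 1 + W * W * S := by
      rw [hTdef, Matrix.mul_add, Matrix.add_mul, Matrix.mul_one, hWWi]
      congr 1
      simp only [Matrix.mul_assoc, hWWi, Matrix.mul_one]
    rw [h, hWW]
  have hMSm : 1 - M * S = W * (1 - T) * W⁻¹ := by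
    have h : W * (1 - T) * W⁻¹ = 1 - W * W * S := by
      rw [hTdef, Matrix.mul_sub, Matrix.sub_mul, Matrix.mul_one, hWWi]
      congr 1
      simp only [Matrix.mul_assoc, hWWi, Matrix.mul_one]
    rw [h, hWW]
  have hInv : (1 + M * S)⁻¹ = W * ((1 + T)⁻¹ * W⁻¹) := by
    rw [hMSp, Matrix.mul_inv_rev, Matrix.mul_inv_rev, nonsing_inv_nonsing_inv W hWdet]
  have hbase : P = W * ((1 + T)⁻¹ * (J * ((1 - T) * W⁻¹))) := by
    rw [hP, hInv, hMSm]
    simp only [Matrix.mul_assoc]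
    rw [← Matrix.mul_assoc W⁻¹ J, hWiJ, Matrix.mul_assoc J W⁻¹, ← Matrix.mul_assoc W⁻¹ W, hWiW,
      Matrix.one_mul]
  have cWiW : ∀ X : Matrix (Fin r ⊕ Fin r) (Fin r ⊕ Fin r) ℝ, W⁻¹ * (W * X) = X := fun X => by
    rw [← Matrix.mul_assoc, hWiW, Matrix.one_mul]
  have hPdec : ∀ j : ℕ, P ^ (j + 1)
      = W * ((1 + T)⁻¹ * ((J * ((1 - T) * (1 + T)⁻¹)) ^ j * (J * ((1 - T) * W⁻¹)))) := by
    intro j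
    induction j with
    | zero => simpa using hbase
    | succ j ih =>
      rw [pow_succ, ih, hbase]
      simp only [pow_succ, Matrix.mul_assoc]
      simp only [cWiW]
  -- CLM facts
  have hadjJ : ContinuousLinearMap.adjoint (φ J) = φ J := by
    rw [← ContinuousLinearMap.star_eq_adjoint, ← StarHomClass.map_star, star_eq_conjTranspose, hJH]
  have hJsq : ∀ v, φ J (φ J v) = v := fun v => by
    have h : φ J * φ J = 1 := by rw [← _root_.map_mul, hJJ, _root_.map_one]
    calc φ J (φ J v) = (φ J * φ J) v := (ContinuousLinearMap.mul_apply _ _ _).symm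
      _ = v := by rw [h, ContinuousLinearMap.one_apply]
  have hJiso : ∀ v, ‖φ J v‖ = ‖v‖ := fun v => by
    have h := ContinuousLinearMap.adjoint_inner_left (φ J) (φ J v) v
    rw [hadjJ, hJsq v] at h
    have h3 : ‖φ J v‖ ^ 2 = ‖v‖ ^ 2 := by
      rw [← real_inner_self_eq_norm_sq, ← real_inner_self_eq_norm_sq, h]
    calc ‖φ J v‖ = √(‖φ J v‖ ^ 2) := (Real.sqrt_sq (norm_nonneg _)).symm
      _ = √(‖v‖ ^ 2) := by rw [h3]
      _ = ‖v‖ := Real.sqrt_sq (norm_nonneg _)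
  -- positivity of the constants
  set a := ‖φ U⁻¹‖ with hadef
  set b := ‖φ (1 + T)‖ with hbdef
  have ha1 : (1:ℝ) ≤ a * ‖φ U‖ := by
    calc (1:ℝ) = ‖(1 : EuclideanSpace ℝ (Fin r ⊕ Fin r) →L[ℝ] EuclideanSpace ℝ (Fin r ⊕ Fin r))‖ :=
        hone.symm
      _ = ‖φ (U⁻¹ * U)‖ := by rw [hUiU, _root_.map_one]
      _ ≤ a * ‖φ U‖ := by rw [_root_.map_mul]; exact norm_mul_le _ _
  have ha : 0 < a := by
    rcases lt_or_ge 0 a with h | h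
    · exact h
    · have h0 : a = 0 := le_antisymm h (norm_nonneg _)
      rw [h0, zero_mul] at ha1; linarith
  have hb1 : (1:ℝ) ≤ ‖φ (1 + T)⁻¹‖ * b := by
    calc (1:ℝ) = ‖(1 : EuclideanSpace ℝ (Fin r ⊕ Fin r) →L[ℝ] EuclideanSpace ℝ (Fin r ⊕ Fin r))‖ :=
        hone.symm
      _ = ‖φ ((1 + T)⁻¹ * (1 + T))‖ := by rw [h1TiT, _root_.map_one]
      _ ≤ ‖φ (1 + T)⁻¹‖ * b := by rw [_root_.map_mul]; exact norm_mul_le _ _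
  have hb : 0 < b := by
    rcases lt_or_ge 0 b with h | h
    · exact h
    · have h0 : b = 0 := le_antisymm h (norm_nonneg _)
      rw [h0, mul_zero] at hb1; linarith
  set ρ := Real.sqrt (max 0 (1 - 4 / (a ^ 2 * b ^ 2))) with hρdef
  have hρ0 : 0 ≤ ρ := Real.sqrt_nonneg _
  have hρsq : ρ ^ 2 = max 0 (1 - 4 / (a ^ 2 * b ^ 2)) := Real.sq_sqrt (le_max_left _ _)
  clear_value a b ρ
  have hρ1 : ρ < 1 := by
    rw [hρdef, Real.sqrt_lt' one_pos]
    apply max_lt (by norm_num)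
    have hab : 0 < a ^ 2 * b ^ 2 := mul_pos (pow_pos ha 2) (pow_pos hb 2)
    have : 0 < 4 / (a ^ 2 * b ^ 2) := div_pos (by norm_num) hab
    nlinarith
  -- the core contraction bound
  have hcore : ∀ x, ‖φ (J * ((1 - T) * (1 + T)⁻¹)) x‖ ≤ ρ * ‖x‖ := by
    intro x
    set y := φ (1 + T)⁻¹ x with hydef
    have hxy : φ (1 + T) y = x := by
      rw [hydef]
      calc φ (1 + T) (φ (1 + T)⁻¹ x) = (φ (1 + T) * φ (1 + T)⁻¹) x :=
          (ContinuousLinearMap.mul_apply _ _ _).symm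
        _ = x := by rw [← _root_.map_mul, h1TTi, _root_.map_one, ContinuousLinearMap.one_apply]
    have happ : φ (J * ((1 - T) * (1 + T)⁻¹)) x = φ J (φ (1 - T) y) := by
      rw [_root_.map_mul, _root_.map_mul, ContinuousLinearMap.mul_apply, ContinuousLinearMap.mul_apply, hydef]
    rw [happ, hJiso]
    have h1m : φ (1 - T) y = y - φ T y := by
      rw [_root_.map_sub, _root_.map_one, ContinuousLinearMap.sub_apply, ContinuousLinearMap.one_apply]
    have h1p : x = y + φ T y := by
      rw [← hxy, _root_.map_add, _root_.map_one, ContinuousLinearMap.add_apply, ContinuousLinearMap.one_apply]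
    have hadjU : ContinuousLinearMap.adjoint (φ U) = φ U := by
      rw [← ContinuousLinearMap.star_eq_adjoint, ← StarHomClass.map_star, star_eq_conjTranspose, hUH]
    have hinner : (inner ℝ y (φ T y) : ℝ) = ‖φ U y‖ ^ 2 := by
      have hτ : φ T y = φ U (φ U y) := by
        rw [← hUU, _root_.map_mul, ContinuousLinearMap.mul_apply]
      have h := ContinuousLinearMap.adjoint_inner_left (φ U) (φ U y) y
      rw [hadjU] at h
      rw [hτ, ← h, real_inner_self_eq_norm_sq]
    have hay : ‖y‖ ≤ a * ‖φ U y‖ := by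
      have h : φ U⁻¹ (φ U y) = y := by
        calc φ U⁻¹ (φ U y) = (φ U⁻¹ * φ U) y := (ContinuousLinearMap.mul_apply _ _ _).symm
          _ = y := by rw [← _root_.map_mul, hUiU, _root_.map_one, ContinuousLinearMap.one_apply]
      calc ‖y‖ = ‖φ U⁻¹ (φ U y)‖ := by rw [h]
        _ ≤ ‖φ U⁻¹‖ * ‖φ U y‖ := ContinuousLinearMap.le_opNorm _ _
        _ = a * ‖φ U y‖ := by rw [hadef]
    have hbx : ‖x‖ ≤ b * ‖y‖ := by
      rw [← hxy, hbdef]; exact ContinuousLinearMap.le_opNorm _ _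
    have hsq : ‖φ (1 - T) y‖ ^ 2 = ‖x‖ ^ 2 - 4 * ‖φ U y‖ ^ 2 := by
      rw [h1m, norm_sub_sq_real, hinner, h1p, norm_add_sq_real, hinner]
      ring
    have h5 : ‖x‖ ≤ (a * b) * ‖φ U y‖ := by
      calc ‖x‖ ≤ b * ‖y‖ := hbx
        _ ≤ b * (a * ‖φ U y‖) := mul_le_mul_of_nonneg_left hay hb.le
        _ = (a * b) * ‖φ U y‖ := by ring
    have hxby : ‖x‖ ^ 2 ≤ (a * b) ^ 2 * ‖φ U y‖ ^ 2 := by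
      nlinarith [norm_nonneg x, h5, mul_nonneg (mul_nonneg ha.le hb.le) (norm_nonneg (φ U y))]
    have hρsq' : ‖φ (1 - T) y‖ ^ 2 ≤ ρ ^ 2 * ‖x‖ ^ 2 := by
      rw [hsq, hρsq]
      have hab : 0 < a ^ 2 * b ^ 2 := mul_pos (pow_pos ha 2) (pow_pos hb 2)
      have h6 : (4 / (a ^ 2 * b ^ 2)) * ‖x‖ ^ 2 ≤ 4 * ‖φ U y‖ ^ 2 := by
        rw [div_mul_eq_mul_div, div_le_iff₀ hab]
        nlinarith [hxby]
      have h7 : ‖x‖ ^ 2 - 4 * ‖φ U y‖ ^ 2 ≤ (1 - 4 / (a ^ 2 * b ^ 2)) * ‖x‖ ^ 2 := by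
        nlinarith [h6]
      calc ‖x‖ ^ 2 - 4 * ‖φ U y‖ ^ 2 ≤ (1 - 4 / (a ^ 2 * b ^ 2)) * ‖x‖ ^ 2 := h7
        _ ≤ max 0 (1 - 4 / (a ^ 2 * b ^ 2)) * ‖x‖ ^ 2 :=
          mul_le_mul_of_nonneg_right (le_max_right _ _) (sq_nonneg _)
    calc ‖φ (1 - T) y‖ = √(‖φ (1 - T) y‖ ^ 2) := (Real.sqrt_sq (norm_nonneg _)).symm
      _ ≤ √(ρ ^ 2 * ‖x‖ ^ 2) := Real.sqrt_le_sqrt hρsq'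
      _ = ρ * ‖x‖ := by
        rw [show ρ ^ 2 * ‖x‖ ^ 2 = (ρ * ‖x‖) ^ 2 by ring,
          Real.sqrt_sq (mul_nonneg hρ0 (norm_nonneg _))]
  have hJC : ‖φ (J * ((1 - T) * (1 + T)⁻¹))‖ ≤ ρ :=
    ContinuousLinearMap.opNorm_le_bound _ hρ0 hcore
  have hpow : ∀ j : ℕ, ‖(φ (J * ((1 - T) * (1 + T)⁻¹))) ^ j‖ ≤ ρ ^ j := by
    intro j
    induction j with
    | zero => rw [pow_zero, pow_zero, hone]
    | succ j ih =>
      rw [pow_succ, pow_succ]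
      calc ‖(φ (J * ((1 - T) * (1 + T)⁻¹))) ^ j * φ (J * ((1 - T) * (1 + T)⁻¹))‖
          ≤ ‖(φ (J * ((1 - T) * (1 + T)⁻¹))) ^ j‖ * ‖φ (J * ((1 - T) * (1 + T)⁻¹))‖ :=
            norm_mul_le _ _
        _ ≤ ρ ^ j * ρ := mul_le_mul ih hJC (norm_nonneg _) (pow_nonneg hρ0 j)
  refine ⟨‖φ W‖ * ‖φ (1 + T)⁻¹‖ * ‖φ (J * ((1 - T) * W⁻¹))‖, ρ, mul_nonneg (mul_nonneg (norm_nonneg _) (norm_nonneg _)) (norm_nonneg _), hρ0, hρ1, ?_⟩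
  intro k hk
  obtain ⟨j, rfl⟩ : ∃ j, k = j + 1 := ⟨k - 1, (Nat.succ_pred_eq_of_pos hk).symm⟩
  rw [hPdec j, _root_.map_mul, _root_.map_mul, _root_.map_mul, _root_.map_pow,
    Nat.add_sub_cancel]
  have t1 : ‖(φ (J * ((1 - T) * (1 + T)⁻¹))) ^ j * φ (J * ((1 - T) * W⁻¹))‖
      ≤ ρ ^ j * ‖φ (J * ((1 - T) * W⁻¹))‖ :=
    le_trans (norm_mul_le _ _) (mul_le_mul_of_nonneg_right (hpow j) (norm_nonneg _))
  have t2 : ‖φ (1 + T)⁻¹ * ((φ (J * ((1 - T) * (1 + T)⁻¹))) ^ j * φ (J * ((1 - T) * W⁻¹)))‖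
      ≤ ‖φ (1 + T)⁻¹‖ * (ρ ^ j * ‖φ (J * ((1 - T) * W⁻¹))‖) :=
    le_trans (norm_mul_le _ _) (mul_le_mul_of_nonneg_left t1 (norm_nonneg _))
  calc ‖φ W * (φ (1 + T)⁻¹ * ((φ (J * ((1 - T) * (1 + T)⁻¹))) ^ j * φ (J * ((1 - T) * W⁻¹))))‖
      ≤ ‖φ W‖ * (‖φ (1 + T)⁻¹‖ * (ρ ^ j * ‖φ (J * ((1 - T) * W⁻¹))‖)) :=
        le_trans (norm_mul_le _ _) (mul_le_mul_of_nonneg_left t2 (norm_nonneg _))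
    _ = ‖φ W‖ * ‖φ (1 + T)⁻¹‖ * ‖φ (J * ((1 - T) * W⁻¹))‖ * ρ ^ j := by ring
end

section
/- Let Z be a real symmetric positive definite r×r matrix, let M be the 2r×2r block-diagonal matrix M = [[Z, 0], [0, Z]], let S be a real symmetric positive definite 2r×2r matrix, let J be the 2r×2r swap matrix J = [[0, I], [I, 0]], and let P := (I + M·S)⁻¹ · J · (I − M·S) (the matrix I + M·S being invertible). Then the powers P^k converge to the zero matrix as k → ∞. -/
open Matrix

theorem vtm_aux_tendsto {n : Type*} [Fintype n] [DecidableEq n] [Nonempty n]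
    (Q D : Matrix n n ℝ) (hD : D.PosDef) (hQQ : Qᵀ * Q = 1 - (D + D + D + D)) :
    Filter.Tendsto (fun k : ℕ => Q ^ k) Filter.atTop (nhds 0) := by
  classical
  set φ := Matrix.toEuclideanCLM (𝕜 := ℝ) (n := n) with hφ
  set L := φ Q with hL
  have hdot : ∀ v : EuclideanSpace ℝ n, ‖v‖ ^ 2
      = (WithLp.equiv 2 (n → ℝ) v) ⬝ᵥ (WithLp.equiv 2 (n → ℝ) v) := by
    intro v
    rw [← real_inner_self_eq_norm_sq]
    simp only [PiLp.inner_apply, dotProduct, RCLike.inner_apply, WithLp.equiv_apply, conj_trivial, mul_comm]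
  have hLx : ∀ x : EuclideanSpace ℝ n, ‖L x‖ ^ 2
      = ‖x‖ ^ 2 - 4 * ((WithLp.equiv 2 (n → ℝ) x) ⬝ᵥ (D *ᵥ (WithLp.equiv 2 (n → ℝ) x))) := by
    intro x
    set y : n → ℝ := WithLp.equiv 2 (n → ℝ) x with hy
    have h1 : ‖L x‖ ^ 2 = (Q *ᵥ y) ⬝ᵥ (Q *ᵥ y) := by
      rw [hdot]
      rw [hL, hφ]
      simp [ofLp_toEuclideanCLM, hy]
    have h3 : (Q *ᵥ y) ⬝ᵥ (Q *ᵥ y) = y ⬝ᵥ ((Qᵀ * Q) *ᵥ y) := by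
      simp [← mulVec_mulVec, dotProduct_mulVec, vecMul_transpose]
    rw [h1, h3, hQQ, hdot x]
    simp only [sub_mulVec, add_mulVec, one_mulVec, dotProduct_sub, dotProduct_add, ← hy]
    ring
  have hlt : ∀ x : EuclideanSpace ℝ n, x ≠ 0 → ‖L x‖ < ‖x‖ := by
    intro x hx
    have hy0 : (WithLp.equiv 2 (n → ℝ) x) ≠ 0 := by
      simpa using hx
    have hpos := hD.dotProduct_mulVec_pos hy0
    rw [star_trivial] at hpos
    have hsq : ‖L x‖ ^ 2 < ‖x‖ ^ 2 := by
      rw [hLx x]; nlinarith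
    exact lt_of_pow_lt_pow_left₀ 2 (norm_nonneg x) hsq
  have hnontriv : Nontrivial (EuclideanSpace ℝ n) := by
    refine ⟨(WithLp.equiv 2 (n → ℝ)).symm (fun _ => 1), 0, fun h => ?_⟩
    have := congrFun (congrArg (WithLp.equiv 2 (n → ℝ)) h) (Classical.arbitrary n)
    simp at this
  obtain ⟨x₀, hx₀mem, hx₀max⟩ := (isCompact_sphere (0 : EuclideanSpace ℝ n) 1).exists_isMaxOn
    (NormedSpace.sphere_nonempty.mpr zero_le_one) (L.continuous.norm.continuousOn)
  have hx₀norm : ‖x₀‖ = 1 := by simpa using hx₀mem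
  have hc1 : ‖L x₀‖ < 1 := by
    have := hlt x₀ (by intro h; rw [h] at hx₀norm; simp at hx₀norm)
    rwa [hx₀norm] at this
  have hLnorm : ‖L‖ < 1 := by
    refine lt_of_le_of_lt (L.opNorm_le_bound (norm_nonneg _) ?_) hc1
    intro x
    rcases eq_or_ne x 0 with rfl | hx
    · simp
    · have hxn : ‖x‖ ≠ 0 := norm_ne_zero_iff.mpr hx
      have hmem : ‖x‖⁻¹ • x ∈ Metric.sphere (0 : EuclideanSpace ℝ n) 1 := by
        simp [norm_smul, abs_of_nonneg (inv_nonneg.mpr (norm_nonneg x)), inv_mul_cancel₀ hxn]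
      have : ‖L (‖x‖⁻¹ • x)‖ ≤ ‖L x₀‖ := hx₀max hmem
      rw [L.map_smul, norm_smul] at this
      simp only [norm_inv, norm_norm] at this
      calc ‖L x‖ = ‖x‖ * (‖x‖⁻¹ * ‖L x‖) := by field_simp
        _ ≤ ‖x‖ * ‖L x₀‖ := by
            apply mul_le_mul_of_nonneg_left _ (norm_nonneg x)
            exact this
        _ = ‖L x₀‖ * ‖x‖ := mul_comm _ _
  have htL : Filter.Tendsto (fun k : ℕ => L ^ k) Filter.atTop (nhds 0) :=
    tendsto_pow_atTop_nhds_zero_of_norm_lt_one hLnorm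
  have hcont : Continuous (φ.symm : (EuclideanSpace ℝ n →L[ℝ] EuclideanSpace ℝ n) → Matrix n n ℝ) := by
    have : IsLinearMap ℝ (φ.symm : (EuclideanSpace ℝ n →L[ℝ] EuclideanSpace ℝ n) → Matrix n n ℝ) :=
      ⟨fun a b => map_add _ a b, fun c a => map_smul _ c a⟩
    exact (IsLinearMap.mk' _ this).continuous_of_finiteDimensional
  have := (hcont.tendsto 0).comp htL
  rw [map_zero] at this
  convert this using 1
  funext k
  show Q ^ k = φ.symm (L ^ k)
  rw [hL, ← map_pow, StarAlgEquiv.symm_apply_apply]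

open scoped MatrixOrder in
theorem vtm_aux {n : Type*} [Fintype n] [DecidableEq n] [Nonempty n]
    (M S J : Matrix n n ℝ) (hM : M.PosDef) (hS : S.PosDef)
    (hJJ : J * J = 1) (hJM : J * M = M * J) (hJt : Jᵀ = J) :
    Filter.Tendsto (fun k : ℕ => ((1 + M * S)⁻¹ * J * (1 - M * S)) ^ k) Filter.atTop (nhds 0) := by
  classical
  have hMt : Mᵀ = M := by rw [← conjTranspose_eq_transpose_of_trivial]; exact hM.1
  have hSt : Sᵀ = S := by rw [← conjTranspose_eq_transpose_of_trivial]; exact hS.1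
  have hMu : IsUnit M := hM.isUnit
  have hMd : IsUnit M.det := (isUnit_iff_isUnit_det M).mp hMu
  have hMMi : M * M⁻¹ = 1 := mul_nonsing_inv M hMd
  have hMiM : M⁻¹ * M = 1 := nonsing_inv_mul M hMd
  set A := M * S with hA
  have hW : (M⁻¹ + S).PosDef := by
    refine .of_dotProduct_mulVec_pos (hM.inv.1.add hS.1) fun x hx => ?_
    simpa [add_mulVec, dotProduct_add] using add_pos (hM.inv.dotProduct_mulVec_pos hx) (hS.dotProduct_mulVec_pos hx)
  have h1A : 1 + A = M * (M⁻¹ + S) := by rw [mul_add, hMMi]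
  have hU : IsUnit (1 + A) := h1A ▸ hMu.mul hW.isUnit
  have hUd : IsUnit (1 + A).det := (isUnit_iff_isUnit_det _).mp hU
  have hUt : IsUnit ((1 + A)ᵀ).det := by rwa [det_transpose]
  have hAt : (1 + A)ᵀ = 1 + S * M := by simp [hA, transpose_add, transpose_mul, hMt, hSt]
  have hAt' : (1 - A)ᵀ = 1 - S * M := by simp [hA, transpose_sub, transpose_mul, hMt, hSt]
  set G := (1 + A)ᵀ * M⁻¹ * (1 + A) with hGdef
  have hG : G = M⁻¹ + S + S + S * M * S := by
    rw [hGdef, hAt, hA]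
    have e : (1 + S * M) * M⁻¹ * (1 + M * S)
        = M⁻¹ + S * (M * M⁻¹) + M⁻¹ * M * S + S * (M * M⁻¹) * M * S := by noncomm_ring
    rw [e, hMMi, hMiM]
    noncomm_ring
  have hG' : (1 - A)ᵀ * M⁻¹ * (1 - A) = M⁻¹ - S - S + S * M * S := by
    rw [hAt', hA]
    have e : (1 - S * M) * M⁻¹ * (1 - M * S)
        = M⁻¹ - S * (M * M⁻¹) - M⁻¹ * M * S + S * (M * M⁻¹) * M * S := by noncomm_ring
    rw [e, hMMi, hMiM]
    noncomm_ring
  have hGsub : (1 - A)ᵀ * M⁻¹ * (1 - A) = G - (S + S + S + S) := by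
    rw [hG, hG']; abel
  have hJMi : J * M⁻¹ = M⁻¹ * J := by
    calc J * M⁻¹ = M⁻¹ * M * J * M⁻¹ := by rw [hMiM, one_mul]
    _ = M⁻¹ * (M * J) * M⁻¹ := by noncomm_ring
    _ = M⁻¹ * (J * M) * M⁻¹ := by rw [hJM]
    _ = M⁻¹ * J * (M * M⁻¹) := by noncomm_ring
    _ = M⁻¹ * J := by rw [hMMi, mul_one]
  have hJMJ : J * M⁻¹ * J = M⁻¹ := by
    rw [hJMi, mul_assoc, hJJ, mul_one]
  set P := (1 + A)⁻¹ * J * (1 - A) with hPdef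
  have hPt : Pᵀ = (1 - A)ᵀ * J * ((1 + A)ᵀ)⁻¹ := by
    rw [hPdef, transpose_mul, transpose_mul, hJt, transpose_nonsing_inv, mul_assoc]
  have hkey : Pᵀ * G * P = G - (S + S + S + S) := by
    rw [hPt, hPdef, hGdef]
    calc (1 - A)ᵀ * J * ((1 + A)ᵀ)⁻¹ * ((1 + A)ᵀ * M⁻¹ * (1 + A)) * ((1 + A)⁻¹ * J * (1 - A))
        = (1 - A)ᵀ * J * (((1 + A)ᵀ)⁻¹ * (1 + A)ᵀ) * M⁻¹ * ((1 + A) * (1 + A)⁻¹) * J * (1 - A) := by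
          noncomm_ring
      _ = (1 - A)ᵀ * (J * M⁻¹ * J) * (1 - A) := by
          rw [nonsing_inv_mul _ hUt, mul_nonsing_inv _ hUd]; noncomm_ring
      _ = (1 - A)ᵀ * M⁻¹ * (1 - A) := by rw [hJMJ]
      _ = G - (S + S + S + S) := hGsub
  -- square root of M⁻¹
  have hMi : (M⁻¹).PosDef := hM.inv
  set R := CFC.sqrt (M⁻¹) with hRdef
  have hRR : R * R = M⁻¹ := CFC.sqrt_mul_sqrt_self _ hMi.posSemidef.nonneg
  have hRt : Rᵀ = R := by
    rw [← conjTranspose_eq_transpose_of_trivial]; exact (CFC.sqrt_nonneg _).posSemidef.1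
  have hRu : IsUnit R := by
    have h1 : IsUnit (M⁻¹).det := isUnit_nonsing_inv_det M hMd
    rw [← hRR, det_mul] at h1
    exact (isUnit_iff_isUnit_det R).mpr (isUnit_of_mul_isUnit_left h1)
  set B := R * (1 + A) with hBdef
  have hBu : IsUnit B := hRu.mul hU
  have hBd : IsUnit B.det := (isUnit_iff_isUnit_det B).mp hBu
  have hBid : IsUnit (B⁻¹).det := isUnit_nonsing_inv_det B hBd
  have hBiu : IsUnit (B⁻¹) := (isUnit_iff_isUnit_det _).mpr hBid
  set D := (B⁻¹)ᵀ * S * B⁻¹ with hDdef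
  have hD : D.PosDef := by
    refine .of_dotProduct_mulVec_pos ?_ ?_
    · show _ = _
      rw [hDdef, conjTranspose_mul, conjTranspose_mul, hS.1.eq]
      simp [← conjTranspose_eq_transpose_of_trivial, Matrix.mul_assoc]
    · intro x hx
      have hCx : B⁻¹ *ᵥ x ≠ 0 := by
        intro h
        exact hx ((mulVec_injective_iff_isUnit.mpr hBiu) (by simpa using h))
      have h2 := hS.dotProduct_mulVec_pos hCx
      have h3 : star x ⬝ᵥ (((B⁻¹)ᵀ * S * B⁻¹) *ᵥ x) = star (B⁻¹ *ᵥ x) ⬝ᵥ (S *ᵥ (B⁻¹ *ᵥ x)) := by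
        simp [star_trivial, ← mulVec_mulVec, dotProduct_mulVec, vecMul_transpose]
      rw [hDdef, h3]; exact h2
  set Q := B * P * B⁻¹ with hQdef
  have hBtB : Bᵀ * B = G := by
    rw [hBdef, transpose_mul, hRt, hGdef]
    calc (1 + A)ᵀ * R * (R * (1 + A))
        = (1 + A)ᵀ * (R * R) * (1 + A) := by noncomm_ring
      _ = (1 + A)ᵀ * M⁻¹ * (1 + A) := by rw [hRR]
  have hBBi : B * B⁻¹ = 1 := mul_nonsing_inv B hBd
  have hBiB : B⁻¹ * B = 1 := nonsing_inv_mul B hBd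
  have h1 : (B⁻¹)ᵀ * Bᵀ = 1 := by rw [← transpose_mul, hBBi, transpose_one]
  have hQQ : Qᵀ * Q = 1 - (D + D + D + D) := by
    rw [hQdef, hDdef]
    calc (B * P * B⁻¹)ᵀ * (B * P * B⁻¹)
        = (B⁻¹)ᵀ * (Pᵀ * (Bᵀ * B) * P) * B⁻¹ := by
          rw [transpose_mul, transpose_mul]; noncomm_ring
      _ = (B⁻¹)ᵀ * (G - (S + S + S + S)) * B⁻¹ := by rw [hBtB, hkey]
      _ = (B⁻¹)ᵀ * G * B⁻¹ - ((B⁻¹)ᵀ * S * B⁻¹ + (B⁻¹)ᵀ * S * B⁻¹ + (B⁻¹)ᵀ * S * B⁻¹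
            + (B⁻¹)ᵀ * S * B⁻¹) := by
          noncomm_ring
      _ = 1 - ((B⁻¹)ᵀ * S * B⁻¹ + (B⁻¹)ᵀ * S * B⁻¹ + (B⁻¹)ᵀ * S * B⁻¹ + (B⁻¹)ᵀ * S * B⁻¹) := by
          rw [← hBtB]
          have h2 : (B⁻¹)ᵀ * (Bᵀ * B) * B⁻¹ = ((B⁻¹)ᵀ * Bᵀ) * (B * B⁻¹) := by noncomm_ring
          rw [h2, h1, hBBi, one_mul]
  have htQ := vtm_aux_tendsto Q D hD hQQ
  have hPB : P = B⁻¹ * Q * B := by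
    rw [hQdef]
    calc P = (B⁻¹ * B) * P * (B⁻¹ * B) := by rw [hBiB]; noncomm_ring
      _ = B⁻¹ * (B * P * B⁻¹) * B := by noncomm_ring
  have hpow : ∀ k : ℕ, P ^ k = B⁻¹ * Q ^ k * B := by
    intro k
    induction k with
    | zero => rw [pow_zero, pow_zero, mul_one, hBiB]
    | succ k ih =>
        rw [pow_succ, pow_succ, ih, hPB]
        calc B⁻¹ * Q ^ k * B * (B⁻¹ * Q * B)
            = B⁻¹ * Q ^ k * (B * B⁻¹) * Q * B := by noncomm_ring
          _ = B⁻¹ * (Q ^ k * Q) * B := by rw [hBBi]; noncomm_ring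
  have h2 : Filter.Tendsto (fun k : ℕ => B⁻¹ * Q ^ k * B) Filter.atTop (nhds (B⁻¹ * 0 * B)) :=
    (htQ.const_mul (B⁻¹)).mul_const B
  rw [mul_zero, zero_mul] at h2
  have h3 : (fun k : ℕ => P ^ k) = fun k : ℕ => B⁻¹ * Q ^ k * B := funext hpow
  rw [h3]
  exact h2

theorem vtm_convergence_coupled (r : ℕ)
    (Z : Matrix (Fin r) (Fin r) ℝ) (hZ : Z.PosDef)
    (S : Matrix (Fin r ⊕ Fin r) (Fin r ⊕ Fin r) ℝ) (hS : S.PosDef)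
    (M J P : Matrix (Fin r ⊕ Fin r) (Fin r ⊕ Fin r) ℝ)
    (hM : M = fromBlocks Z 0 0 Z)
    (hJ : J = fromBlocks 0 1 1 0)
    (hP : P = (1 + M * S)⁻¹ * J * (1 - M * S)) :
    Filter.Tendsto (fun k : ℕ => P ^ k) Filter.atTop (nhds 0) := by
  subst hM hJ hP
  rcases Nat.eq_zero_or_pos r with hr | hr
  · subst hr
    have hall : ∀ X Y : Matrix (Fin 0 ⊕ Fin 0) (Fin 0 ⊕ Fin 0) ℝ, X = Y := by
      intro X Y
      ext i j
      exact i.elim (fun a => a.elim0) (fun a => a.elim0)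
    have h0 : (fun k : ℕ => ((1 + fromBlocks Z 0 0 Z * S)⁻¹ * fromBlocks 0 1 1 0
        * (1 - fromBlocks Z 0 0 Z * S)) ^ k) = fun _ : ℕ => (0 : Matrix _ _ ℝ) :=
      funext fun k => hall _ _
    rw [h0]
    exact tendsto_const_nhds
  · haveI : Nonempty (Fin r ⊕ Fin r) := ⟨Sum.inl ⟨0, hr⟩⟩
    have hMpd : (fromBlocks Z 0 0 Z).PosDef := by
      refine .of_dotProduct_mulVec_pos ?_ ?_
      · show _ = _
        rw [fromBlocks_conjTranspose, hZ.1.eq]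
        simp
      · intro x hx
        have hx' : x = Sum.elim (x ∘ Sum.inl) (x ∘ Sum.inr) := by
          ext i; cases i <;> rfl
        rw [hx', fromBlocks_mulVec]
        simp only [zero_mulVec, add_zero, zero_add, mulVec_zero]
        rw [star_trivial, sumElim_dotProduct_sumElim]
        have hne : x ∘ Sum.inl ≠ 0 ∨ x ∘ Sum.inr ≠ 0 := by
          by_contra h
          push_neg at h
          apply hx
          ext i
          cases i with
          | inl i => exact congrFun h.1 i
          | inr i => exact congrFun h.2 i
        rcases hne with h | h
        · exact add_pos_of_pos_of_nonneg (by simpa using hZ.dotProduct_mulVec_pos h)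
            (by simpa using hZ.posSemidef.dotProduct_mulVec_nonneg _)
        · exact add_pos_of_nonneg_of_pos (by simpa using hZ.posSemidef.dotProduct_mulVec_nonneg _)
            (by simpa using hZ.dotProduct_mulVec_pos h)
    have hJJ : (fromBlocks 0 1 1 0 : Matrix (Fin r ⊕ Fin r) (Fin r ⊕ Fin r) ℝ)
        * fromBlocks 0 1 1 0 = 1 := by
      rw [fromBlocks_multiply]
      simpa using @fromBlocks_one (Fin r) (Fin r) ℝ _ _ _
    have hJM : (fromBlocks 0 1 1 0 : Matrix (Fin r ⊕ Fin r) (Fin r ⊕ Fin r) ℝ)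
        * fromBlocks Z 0 0 Z = fromBlocks Z 0 0 Z * fromBlocks 0 1 1 0 := by
      rw [fromBlocks_multiply, fromBlocks_multiply]
      simp
    have hJt : (fromBlocks 0 1 1 0 : Matrix (Fin r ⊕ Fin r) (Fin r ⊕ Fin r) ℝ)ᵀ
        = fromBlocks 0 1 1 0 := by
      rw [fromBlocks_transpose]
      simp
    exact vtm_aux _ S _ hMpd hS hJJ hJM hJt
end

section
/- Let Z be a real symmetric positive definite r×r matrix, let M be the 2r×2r block-diagonal matrix M = [[Z, 0], [0, Z]], let S be a real symmetric positive definite 2r×2r matrix, let J be the 2r×2r swap matrix J = [[0, I], [I, 0]], let P := (I + M·S)⁻¹ · J · (I − M·S), and let γ ∈ ℝ^(2r). Then for every initial vector û⁰ ∈ ℝ^(2r), the sequence defined recursively by û^k := P·û^(k−1) + γ converges as k → ∞, and its limit û∞ is the unique vector satisfying û∞ = P·û∞ + γ; in particular, the limit does not depend on the initial vector û⁰. -/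
open Matrix Filter

section helpers
variable {n : Type*} [Fintype n]

lemma quad_smul (B : Matrix n n ℝ) (c : ℝ) (v : n → ℝ) :
    (c • v) ⬝ᵥ B *ᵥ (c • v) = c ^ 2 * (v ⬝ᵥ B *ᵥ v) := by
  rw [mulVec_smul, dotProduct_smul, smul_dotProduct, smul_eq_mul, smul_eq_mul]
  ring

lemma quad_continuous (B : Matrix n n ℝ) : Continuous (fun v : n → ℝ => v ⬝ᵥ B *ᵥ v) := by
  simp only [dotProduct, mulVec]
  exact continuous_finset_sum _ fun i _ =>
    (continuous_apply i).mul (continuous_finset_sum _ fun j _ =>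
      (continuous_const.mul (continuous_apply j)))

lemma posdef_quad_pos {B : Matrix n n ℝ} (hB : B.PosDef) {v : n → ℝ} (hv : v ≠ 0) :
    0 < v ⬝ᵥ B *ᵥ v := by
  have := hB.dotProduct_mulVec_pos hv
  rwa [star_trivial] at this

lemma possemidef_quad_nonneg {B : Matrix n n ℝ} (hB : B.PosSemidef) (v : n → ℝ) :
    0 ≤ v ⬝ᵥ B *ᵥ v := by
  have := hB.dotProduct_mulVec_nonneg v
  rwa [star_trivial] at this

lemma quad_lower {B : Matrix n n ℝ} (hB : B.PosDef) :
    ∃ ε > 0, ∀ v : n → ℝ, ε * ‖v‖ ^ 2 ≤ v ⬝ᵥ B *ᵥ v := by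
  cases isEmpty_or_nonempty n with
  | inl h =>
    refine ⟨1, one_pos, fun v => ?_⟩
    have hv : v = 0 := funext fun i => (h.false i).elim
    simp [hv]
  | inr h =>
    have hsph : (Metric.sphere (0 : n → ℝ) 1).Nonempty :=
      NormedSpace.sphere_nonempty.mpr zero_le_one
    obtain ⟨v0, hv0mem, hv0min⟩ := (isCompact_sphere (0 : n → ℝ) 1).exists_isMinOn hsph
      (quad_continuous B).continuousOn
    have hv0n : ‖v0‖ = 1 := by simpa using hv0mem
    have hv0ne : v0 ≠ 0 := by
      intro h0; rw [h0] at hv0n; simp at hv0n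
    have hε : 0 < v0 ⬝ᵥ B *ᵥ v0 := posdef_quad_pos hB hv0ne
    refine ⟨_, hε, fun v => ?_⟩
    rcases eq_or_ne v 0 with rfl | hv
    · simp
    · have hnv : 0 < ‖v‖ := norm_pos_iff.mpr hv
      have hu : (‖v‖⁻¹ • v) ∈ Metric.sphere (0 : n → ℝ) 1 := by
        simp [norm_smul, abs_of_pos (inv_pos.mpr hnv), inv_mul_cancel₀ hnv.ne']
      have hmin : v0 ⬝ᵥ B *ᵥ v0 ≤ ‖v‖⁻¹ ^ 2 * (v ⬝ᵥ B *ᵥ v) := (quad_smul B ‖v‖⁻¹ v) ▸ hv0min hu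
      have h2 : (0:ℝ) < ‖v‖ ^ 2 := by positivity
      have hinv : ‖v‖⁻¹ ^ 2 * ‖v‖ ^ 2 = 1 := by field_simp
      have h3 := mul_le_mul_of_nonneg_right hmin h2.le
      rwa [mul_comm (‖v‖⁻¹ ^ 2), mul_assoc, hinv, mul_one] at h3

lemma quad_upper {B : Matrix n n ℝ} (hB : B.PosDef) :
    ∃ C > 0, ∀ v : n → ℝ, v ⬝ᵥ B *ᵥ v ≤ C * ‖v‖ ^ 2 := by
  cases isEmpty_or_nonempty n with
  | inl h =>
    refine ⟨1, one_pos, fun v => ?_⟩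
    have hv : v = 0 := funext fun i => (h.false i).elim
    simp [hv]
  | inr h =>
    have hsph : (Metric.sphere (0 : n → ℝ) 1).Nonempty :=
      NormedSpace.sphere_nonempty.mpr zero_le_one
    obtain ⟨v0, hv0mem, hv0max⟩ := (isCompact_sphere (0 : n → ℝ) 1).exists_isMaxOn hsph
      (quad_continuous B).continuousOn
    have hv0n : ‖v0‖ = 1 := by simpa using hv0mem
    have hv0ne : v0 ≠ 0 := by
      intro h0; rw [h0] at hv0n; simp at hv0n
    have hε : 0 < v0 ⬝ᵥ B *ᵥ v0 := posdef_quad_pos hB hv0ne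
    refine ⟨_, hε, fun v => ?_⟩
    rcases eq_or_ne v 0 with rfl | hv
    · simp
    · have hnv : 0 < ‖v‖ := norm_pos_iff.mpr hv
      have hu : (‖v‖⁻¹ • v) ∈ Metric.sphere (0 : n → ℝ) 1 := by
        simp [norm_smul, abs_of_pos (inv_pos.mpr hnv), inv_mul_cancel₀ hnv.ne']
      have hmax : ‖v‖⁻¹ ^ 2 * (v ⬝ᵥ B *ᵥ v) ≤ v0 ⬝ᵥ B *ᵥ v0 := (quad_smul B ‖v‖⁻¹ v) ▸ hv0max hu
      have h2 : (0:ℝ) < ‖v‖ ^ 2 := by positivity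
      have hinv : ‖v‖⁻¹ ^ 2 * ‖v‖ ^ 2 = 1 := by field_simp
      have h3 := mul_le_mul_of_nonneg_right hmax h2.le
      rwa [mul_comm (‖v‖⁻¹ ^ 2), mul_assoc, hinv, mul_one] at h3

end helpers

theorem vtm_iteration_converges (r : ℕ)
    (Z : Matrix (Fin r) (Fin r) ℝ) (hZ : Z.PosDef)
    (S : Matrix (Fin r ⊕ Fin r) (Fin r ⊕ Fin r) ℝ) (hS : S.PosDef)
    (M J P : Matrix (Fin r ⊕ Fin r) (Fin r ⊕ Fin r) ℝ)
    (hM : M = fromBlocks Z 0 0 Z)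
    (hJ : J = fromBlocks 0 1 1 0)
    (hP : P = (1 + M * S)⁻¹ * J * (1 - M * S))
    (γ : Fin r ⊕ Fin r → ℝ) :
    ∃ L : Fin r ⊕ Fin r → ℝ,
      P *ᵥ L + γ = L ∧
      (∀ L' : Fin r ⊕ Fin r → ℝ, P *ᵥ L' + γ = L' → L' = L) ∧
      ∀ u0 : Fin r ⊕ Fin r → ℝ,
        Filter.Tendsto (fun k : ℕ => (fun v => P *ᵥ v + γ)^[k] u0)
          Filter.atTop (nhds L) := by
  classical
  -- M is positive definite
  have hMpd : M.PosDef := by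
    refine posDef_iff_dotProduct_mulVec.mpr ?_
    constructor
    · show Mᴴ = M
      have hZT : Zᵀ = Z := by
        rw [← conjTranspose_eq_transpose_of_trivial]; exact hZ.1
      rw [hM, fromBlocks_conjTranspose]
      simp [conjTranspose_eq_transpose_of_trivial, hZT]
    · intro x hx
      rw [star_trivial, hM, ← Sum.elim_comp_inl_inr x, fromBlocks_mulVec]
      simp only [zero_mulVec, add_zero, zero_add]
      rw [sumElim_dotProduct_sumElim]
      simp only [Sum.elim_comp_inl, Sum.elim_comp_inr]
      have hx' : x ∘ Sum.inl ≠ 0 ∨ x ∘ Sum.inr ≠ 0 := by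
        by_contra hc
        push_neg at hc
        apply hx
        rw [← Sum.elim_comp_inl_inr x, hc.1, hc.2]
        simp
      rcases hx' with h | h
      · have h1 := posdef_quad_pos hZ h
        have h2 := possemidef_quad_nonneg hZ.posSemidef (x ∘ Sum.inr)
        linarith
      · have h1 := posdef_quad_pos hZ h
        have h2 := possemidef_quad_nonneg hZ.posSemidef (x ∘ Sum.inl)
        linarith
  -- kernel of 1 + M*S is trivial
  have hker : ∀ v, (1 + M * S) *ᵥ v = 0 → v = 0 := by
    intro v hv
    by_contra hv0
    have h1 : v + M *ᵥ (S *ᵥ v) = 0 := by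
      rwa [add_mulVec, one_mulVec, ← mulVec_mulVec] at hv
    have h2 : (S *ᵥ v) ⬝ᵥ (v + M *ᵥ (S *ᵥ v)) = 0 := by rw [h1, dotProduct_zero]
    rw [dotProduct_add] at h2
    have h3 : 0 < (S *ᵥ v) ⬝ᵥ v := by
      rw [dotProduct_comm]
      exact posdef_quad_pos hS hv0
    have h4 : 0 ≤ (S *ᵥ v) ⬝ᵥ (M *ᵥ (S *ᵥ v)) := possemidef_quad_nonneg hMpd.posSemidef _
    linarith
  have hdet1 : IsUnit (1 + M * S).det := by
    rw [isUnit_iff_ne_zero]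
    intro h0
    obtain ⟨v, hvne, hv0⟩ := exists_mulVec_eq_zero_iff.mpr h0
    exact hvne (hker v hv0)
  have hdetM : IsUnit M.det := hMpd.det_pos.ne'.isUnit
  have hMM : M * M⁻¹ = 1 := mul_nonsing_inv M hdetM
  have hM'M : M⁻¹ * M = 1 := nonsing_inv_mul M hdetM
  have hBB : (1 + M * S) * (1 + M * S)⁻¹ = 1 := mul_nonsing_inv _ hdet1
  have hJJ : J * J = 1 := by
    rw [hJ, fromBlocks_multiply]
    simp [fromBlocks_one]
  have hJT : Jᵀ = J := by
    rw [hJ, fromBlocks_transpose]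
    simp
  have hJMJ : J * M * J = M := by
    rw [hJ, hM, fromBlocks_multiply, fromBlocks_multiply]
    simp
  have hMT : Mᵀ = M := by
    rw [← conjTranspose_eq_transpose_of_trivial]; exact hMpd.1
  have hST : Sᵀ = S := by
    rw [← conjTranspose_eq_transpose_of_trivial]; exact hS.1
  have hJinv : J⁻¹ = J := inv_eq_right_inv hJJ
  have hJM : J * (M⁻¹ * J) = M⁻¹ := by
    have h := congrArg Inv.inv hJMJ
    rw [Matrix.mul_inv_rev, Matrix.mul_inv_rev, hJinv] at h
    exact h
  have mcancel : ∀ {A B : Matrix (Fin r ⊕ Fin r) (Fin r ⊕ Fin r) ℝ}, A * B = 1 →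
      ∀ X : Matrix (Fin r ⊕ Fin r) (Fin r ⊕ Fin r) ℝ, A * (B * X) = X := by
    intro A B h X
    rw [← mul_assoc, h, one_mul]
  have hBt : (M * S)ᵀ = S * M := by rw [transpose_mul, hMT, hST]
  set W : Matrix (Fin r ⊕ Fin r) (Fin r ⊕ Fin r) ℝ := (1 + M * S)ᵀ * M⁻¹ * (1 + M * S) with hWdef
  have hplus : W = M⁻¹ + S + S + S * M * S := by
    rw [hWdef, transpose_add, transpose_one, hBt]
    have e1 : (1 + S * M) * M⁻¹ = M⁻¹ + S := by
      rw [add_mul, one_mul, mul_assoc, hMM, mul_one]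
    rw [e1, mul_add, mul_one, add_mul, ← mul_assoc M⁻¹ M S, hM'M, one_mul, ← mul_assoc S M S]
    abel
  have hminus : (1 - M * S)ᵀ * M⁻¹ * (1 - M * S) = M⁻¹ - S - S + S * M * S := by
    rw [transpose_sub, transpose_one, hBt]
    have e1 : (1 - S * M) * M⁻¹ = M⁻¹ - S := by
      rw [sub_mul, one_mul, mul_assoc, hMM, mul_one]
    rw [e1, mul_sub, mul_one, sub_mul, ← mul_assoc M⁻¹ M S, hM'M, one_mul, ← mul_assoc S M S]
    abel
  have hdet1T : IsUnit ((1 + M * S)ᵀ).det := by rwa [det_transpose]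
  have hTT : ((1 + M * S)ᵀ)⁻¹ * (1 + M * S)ᵀ = 1 := nonsing_inv_mul _ hdet1T
  have hPT : Pᵀ = (1 - M * S)ᵀ * J * ((1 + M * S)ᵀ)⁻¹ := by
    rw [hP, transpose_mul, transpose_mul, hJT, transpose_nonsing_inv, mul_assoc]
  have hkeyM : Pᵀ * W * P = W - (S + S + S + S) := by
    have h1 : Pᵀ * W * P = (1 - M * S)ᵀ * M⁻¹ * (1 - M * S) := by
      rw [hPT, hP, hWdef]
      have hJMX : ∀ X : Matrix (Fin r ⊕ Fin r) (Fin r ⊕ Fin r) ℝ,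
          J * (M⁻¹ * (J * X)) = M⁻¹ * X := by
        intro X
        rw [← Matrix.mul_assoc M⁻¹ J X, ← Matrix.mul_assoc J (M⁻¹ * J) X, hJM]
      simp only [Matrix.mul_assoc]
      rw [mcancel hTT, mcancel hBB, hJMX]
    rw [h1, hminus, hplus]
    abel
  -- quadratic form identity
  have hq : ∀ v : Fin r ⊕ Fin r → ℝ,
      (P *ᵥ v) ⬝ᵥ W *ᵥ (P *ᵥ v) = v ⬝ᵥ W *ᵥ v - 4 * (v ⬝ᵥ S *ᵥ v) := by
    intro v
    calc (P *ᵥ v) ⬝ᵥ W *ᵥ (P *ᵥ v)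
        = (v ᵥ* Pᵀ) ⬝ᵥ (W *ᵥ (P *ᵥ v)) := by rw [vecMul_transpose]
      _ = v ⬝ᵥ (Pᵀ *ᵥ (W *ᵥ (P *ᵥ v))) := (dotProduct_mulVec _ _ _).symm
      _ = v ⬝ᵥ ((Pᵀ * W * P) *ᵥ v) := by
          rw [mulVec_mulVec, mulVec_mulVec, Matrix.mul_assoc]
      _ = v ⬝ᵥ W *ᵥ v - 4 * (v ⬝ᵥ S *ᵥ v) := by
          rw [hkeyM, sub_mulVec, dotProduct_sub, add_mulVec, add_mulVec, add_mulVec,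
            dotProduct_add, dotProduct_add, dotProduct_add]
          ring
  -- W is positive definite
  have hWpd : W.PosDef := by
    refine posDef_iff_dotProduct_mulVec.mpr ?_
    constructor
    · show Wᴴ = W
      rw [conjTranspose_eq_transpose_of_trivial, hWdef]
      simp only [transpose_mul, transpose_transpose, transpose_nonsing_inv, hMT,
        Matrix.mul_assoc]
    · intro x hx
      have hy : (1 + M * S) *ᵥ x ≠ 0 := fun h0 => hx (hker x h0)
      have heq : star x ⬝ᵥ W *ᵥ x
          = ((1 + M * S) *ᵥ x) ⬝ᵥ M⁻¹ *ᵥ ((1 + M * S) *ᵥ x) := by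
        rw [star_trivial, hWdef]
        calc x ⬝ᵥ ((1 + M * S)ᵀ * M⁻¹ * (1 + M * S)) *ᵥ x
            = x ⬝ᵥ ((1 + M * S)ᵀ *ᵥ ((M⁻¹ * (1 + M * S)) *ᵥ x)) := by
              rw [mulVec_mulVec, Matrix.mul_assoc]
          _ = (x ᵥ* (1 + M * S)ᵀ) ⬝ᵥ ((M⁻¹ * (1 + M * S)) *ᵥ x) := dotProduct_mulVec _ _ _
          _ = ((1 + M * S) *ᵥ x) ⬝ᵥ M⁻¹ *ᵥ ((1 + M * S) *ᵥ x) := by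
              rw [vecMul_transpose, ← mulVec_mulVec]
      rw [heq]
      exact posdef_quad_pos hMpd.inv hy
  -- spectral bounds
  obtain ⟨εS, hεS, hlS⟩ := quad_lower hS
  obtain ⟨εW, hεW, hlW⟩ := quad_lower hWpd
  obtain ⟨C, hC, huW⟩ := quad_upper hWpd
  set ρ : ℝ := max (1 - 4 * εS / C) 0 with hρdef
  have hρ0 : 0 ≤ ρ := le_max_right _ _
  have hρ1 : ρ < 1 := by
    apply max_lt _ one_pos
    have : 0 < 4 * εS / C := div_pos (by linarith) hC
    linarith
  have hWnonneg : ∀ v : Fin r ⊕ Fin r → ℝ, 0 ≤ v ⬝ᵥ W *ᵥ v := fun v =>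
    le_trans (by positivity) (hlW v)
  have hcontr : ∀ v : Fin r ⊕ Fin r → ℝ,
      (P *ᵥ v) ⬝ᵥ W *ᵥ (P *ᵥ v) ≤ ρ * (v ⬝ᵥ W *ᵥ v) := by
    intro v
    have h1 := hq v
    have h2 := hlS v
    have h3 := huW v
    have h4 : (1 - 4 * εS / C) * (v ⬝ᵥ W *ᵥ v) ≤ ρ * (v ⬝ᵥ W *ᵥ v) :=
      mul_le_mul_of_nonneg_right (le_max_left _ _) (hWnonneg v)
    have hpos : (0:ℝ) ≤ 4 * εS / C := le_of_lt (div_pos (by linarith) hC)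
    have h5 : (4 * εS / C) * (v ⬝ᵥ W *ᵥ v) ≤ 4 * εS * ‖v‖ ^ 2 := by
      have h6 := mul_le_mul_of_nonneg_left h3 hpos
      have h7 : 4 * εS / C * (C * ‖v‖ ^ 2) = 4 * εS * ‖v‖ ^ 2 := by
        field_simp [hC.ne']
      linarith
    linarith
  -- kernel of 1 - P is trivial
  have hker2 : ∀ v, (1 - P) *ᵥ v = 0 → v = 0 := by
    intro v hv
    have hPv : P *ᵥ v = v := by
      rw [sub_mulVec, one_mulVec, sub_eq_zero] at hv
      exact hv.symm
    have h1 := hcontr v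
    rw [hPv] at h1
    have h2 : v ⬝ᵥ W *ᵥ v ≤ 0 := by nlinarith [hWnonneg v]
    have h3 := hlW v
    have h4 : ‖v‖ ^ 2 ≤ 0 := by nlinarith
    have h5 : ‖v‖ = 0 := by nlinarith [norm_nonneg v, sq_nonneg ‖v‖]
    exact norm_eq_zero.mp h5
  have hdet2 : IsUnit (1 - P).det := by
    rw [isUnit_iff_ne_zero]
    intro h0
    obtain ⟨v, hvne, hv0⟩ := exists_mulVec_eq_zero_iff.mpr h0
    exact hvne (hker2 v hv0)
  set L : Fin r ⊕ Fin r → ℝ := (1 - P)⁻¹ *ᵥ γ with hLdef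
  have hLfix' : (1 - P) *ᵥ L = γ := by
    rw [hLdef, mulVec_mulVec, mul_nonsing_inv _ hdet2, one_mulVec]
  have hLfix : P *ᵥ L + γ = L := by
    rw [sub_mulVec, one_mulVec] at hLfix'
    rw [← hLfix']
    abel
  refine ⟨L, hLfix, ?_, ?_⟩
  · intro L' hL'
    have h1 : (1 - P) *ᵥ (L' - L) = 0 := by
      rw [mulVec_sub, sub_mulVec, one_mulVec, sub_mulVec, one_mulVec]
      have e1 : L' - P *ᵥ L' = γ := sub_eq_of_eq_add' hL'.symm
      have e2 : L - P *ᵥ L = γ := sub_eq_of_eq_add' hLfix.symm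
      rw [e1, e2, sub_self]
    exact sub_eq_zero.mp (hker2 _ h1)
  · intro u0
    set g : (Fin r ⊕ Fin r → ℝ) → (Fin r ⊕ Fin r → ℝ) := fun v => P *ᵥ v with hgdef
    have hiter : ∀ k : ℕ, (fun v => P *ᵥ v + γ)^[k] u0 = L + g^[k] (u0 - L) := by
      intro k
      induction k with
      | zero =>
        rw [Function.iterate_zero_apply, Function.iterate_zero_apply]
        abel
      | succ k ih =>
        rw [Function.iterate_succ_apply', Function.iterate_succ_apply', ih]
        show P *ᵥ (L + g^[k] (u0 - L)) + γ = L + P *ᵥ (g^[k] (u0 - L))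
        rw [mulVec_add, add_right_comm, hLfix]
    have hqk : ∀ (k : ℕ) (w : Fin r ⊕ Fin r → ℝ),
        (g^[k] w) ⬝ᵥ W *ᵥ (g^[k] w) ≤ ρ ^ k * (w ⬝ᵥ W *ᵥ w) := by
      intro k
      induction k with
      | zero =>
        intro w
        rw [Function.iterate_zero_apply, pow_zero, one_mul]
      | succ k ih =>
        intro w
        rw [Function.iterate_succ_apply']
        calc (g (g^[k] w)) ⬝ᵥ W *ᵥ (g (g^[k] w))
            ≤ ρ * ((g^[k] w) ⬝ᵥ W *ᵥ (g^[k] w)) := hcontr _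
          _ ≤ ρ * (ρ ^ k * (w ⬝ᵥ W *ᵥ w)) := mul_le_mul_of_nonneg_left (ih w) hρ0
          _ = ρ ^ (k + 1) * (w ⬝ᵥ W *ᵥ w) := by ring
    set w0 : Fin r ⊕ Fin r → ℝ := u0 - L with hw0
    have hsq : Tendsto (fun k : ℕ => ‖g^[k] w0‖ ^ 2) atTop (nhds 0) := by
      apply squeeze_zero (g := fun k : ℕ => (w0 ⬝ᵥ W *ᵥ w0 / εW) * ρ ^ k)
        (fun k => by positivity)
      · intro k
        have h1 := hlW (g^[k] w0)
        have h2 := hqk k w0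
        rw [div_mul_eq_mul_div, le_div_iff₀ hεW]
        nlinarith
      · have := tendsto_pow_atTop_nhds_zero_of_lt_one hρ0 hρ1
        simpa using this.const_mul (w0 ⬝ᵥ W *ᵥ w0 / εW)
    have hnorm : Tendsto (fun k : ℕ => ‖g^[k] w0‖) atTop (nhds 0) := by
      have hcomp := (Real.continuous_sqrt.tendsto 0).comp hsq
      simp only [Function.comp_def, Real.sqrt_zero] at hcomp
      have heq : (fun k : ℕ => ‖g^[k] w0‖)
          = fun k : ℕ => Real.sqrt (‖g^[k] w0‖ ^ 2) :=
        funext fun k => (Real.sqrt_sq (norm_nonneg _)).symm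
      rw [heq]
      simpa using hcomp
    rw [tendsto_iff_norm_sub_tendsto_zero]
    have heq2 : (fun k : ℕ => ‖(fun v => P *ᵥ v + γ)^[k] u0 - L‖)
        = fun k : ℕ => ‖g^[k] w0‖ := by
      funext k
      rw [hiter k]
      congr 1
      abel
    rw [heq2]
    exact hnorm
end
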